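/- arXiv:2006.16359 — 8 statements merged into one kernel-verified Lean document; each statement's English description precedes it below -/
import Mathlib

section
/- For any subset J of the simple transpositions of S_n, the maximal-length element w_0^J of the parabolic quotient S_n^J = {σ ∈ S_n : s_i ∈ J implies σ(i) < σ(i+1)} avoids the pattern 132. -/
open Equiv

/-- The adjacent transposition `s i`, swapping positions `i` and `i+1` (0-indexed). -/
def simpleT {n : ℕ} (i : Fin n) : Equiv.Perm (Fin (n+1)) := Equiv.swap i.castSucc i.succ

/-- Coxeter length: minimal length of a word in adjacent transpositions. -/
noncomputable def len {n : ℕ} (σ : Equiv.Perm (Fin (n+1))) : ℕ :=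
  sInf {k | ∃ l : List (Fin n), l.length = k ∧ (l.map simpleT).prod = σ}

/-- `σ` contains the pattern 132. -/
def contains132 {m : ℕ} (σ : Equiv.Perm (Fin m)) : Prop :=
  ∃ i₁ i₂ i₃ : Fin m, i₁ < i₂ ∧ i₂ < i₃ ∧ σ i₁ < σ i₃ ∧ σ i₃ < σ i₂

/-- The parabolic quotient `SₙᴶJ`: permutations ascending at all positions indexed by `J`. -/
def parabolicQuotient {n : ℕ} (J : Set (Fin n)) : Set (Equiv.Perm (Fin (n+1))) :=
  {σ | ∀ i ∈ J, σ i.castSucc < σ i.succ}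

namespace Aux132
variable {n : ℕ}

def invs (σ : Perm (Fin (n+1))) : Finset (Fin (n+1) × Fin (n+1)) :=
  Finset.univ.filter fun p => p.1 < p.2 ∧ σ p.2 < σ p.1

def N (σ : Perm (Fin (n+1))) : ℕ := (invs σ).card

lemma mem_invs {σ : Perm (Fin (n+1))} {p : Fin (n+1) × Fin (n+1)} :
    p ∈ invs σ ↔ p.1 < p.2 ∧ σ p.2 < σ p.1 := by
  simp [invs]

lemma swap_lt (a : Fin n) {u v : Fin (n+1)} (huv : u < v) :
    (Equiv.swap a.castSucc a.succ u < Equiv.swap a.castSucc a.succ v ↔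
      ¬(u = a.castSucc ∧ v = a.succ)) := by
  have key : ∀ x : Fin (n+1), ((Equiv.swap a.castSucc a.succ x : Fin (n+1)) : ℕ) =
      if (x : ℕ) = (a : ℕ) then (a : ℕ) + 1
      else if (x : ℕ) = (a : ℕ) + 1 then (a : ℕ) else (x : ℕ) := by
    intro x
    rw [Equiv.swap_apply_def]
    split_ifs with h1 h2 h3 h4 h5 <;>
      simp_all [Fin.ext_iff, Fin.coe_castSucc, Fin.val_succ]
  rw [Fin.lt_def, key u, key v]
  rw [Fin.lt_def] at huv
  have hu := u.isLt
  have hv := v.isLt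
  simp only [Fin.ext_iff, Fin.coe_castSucc, Fin.val_succ, not_and]
  split_ifs <;> omega

/-- The pair `(j.castSucc, j.succ)` is a descent pair. -/
lemma N_mul_simpleT (σ : Perm (Fin (n+1))) (j : Fin n)
    (h : σ j.succ < σ j.castSucc) : N σ = N (σ * simpleT j) + 1 := by
  classical
  set s : Perm (Fin (n+1)) := Equiv.swap j.castSucc j.succ with hs
  have happ : ∀ x, (σ * simpleT j) x = σ (s x) := fun x => rfl
  have hmemjj : (j.castSucc, j.succ) ∈ invs σ :=
    mem_invs.mpr ⟨(Fin.castSucc_lt_succ : j.castSucc < j.succ), h⟩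
  -- injection 1 : invs (σ * simpleT j) → (invs σ).erase (j.castSucc, j.succ)
  have hle1 : N (σ * simpleT j) ≤ ((invs σ).erase (j.castSucc, j.succ)).card := by
    apply Finset.card_le_card_of_injOn (fun p => (s p.1, s p.2))
    · intro p hp
      obtain ⟨hlt, hinv⟩ := mem_invs.mp hp
      rw [happ, happ] at hinv
      have hne : ¬(p.1 = j.castSucc ∧ p.2 = j.succ) := by
        rintro ⟨e1, e2⟩
        rw [e1, e2] at hinv
        rw [Equiv.swap_apply_left, Equiv.swap_apply_right] at hinv
        exact absurd hinv (asymm h)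
      have hslt : s p.1 < s p.2 := (swap_lt j hlt).mpr hne
      rw [Finset.mem_coe, Finset.mem_erase]
      constructor
      · intro hcontra
        have e1 : s p.1 = j.castSucc := congrArg Prod.fst hcontra
        have e2 : s p.2 = j.succ := congrArg Prod.snd hcontra
        have : p.1 = j.succ := by
          have := congrArg s e1
          rwa [Equiv.swap_apply_self, Equiv.swap_apply_left] at this
        have : p.2 = j.castSucc := by
          have := congrArg s e2
          rwa [Equiv.swap_apply_self, Equiv.swap_apply_right] at this
        rw [‹p.1 = j.succ›, ‹p.2 = j.castSucc›] at hlt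
        exact absurd hlt (asymm (Fin.castSucc_lt_succ : j.castSucc < j.succ))
      · exact mem_invs.mpr ⟨hslt, hinv⟩
    · intro p _ q _ hpq
      have e1 : s p.1 = s q.1 := congrArg Prod.fst hpq
      have e2 : s p.2 = s q.2 := congrArg Prod.snd hpq
      exact Prod.ext (s.injective e1) (s.injective e2)
  -- injection 2 : (invs σ).erase (j.castSucc, j.succ) → invs (σ * simpleT j)
  have hle2 : ((invs σ).erase (j.castSucc, j.succ)).card ≤ N (σ * simpleT j) := by
    apply Finset.card_le_card_of_injOn (fun p => (s p.1, s p.2))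
    · intro p hp
      obtain ⟨hne, hmem⟩ := Finset.mem_erase.mp hp
      obtain ⟨hlt, hinv⟩ := mem_invs.mp hmem
      have hne' : ¬(p.1 = j.castSucc ∧ p.2 = j.succ) := by
        rintro ⟨e1, e2⟩
        exact hne (Prod.ext e1 e2)
      have hslt : s p.1 < s p.2 := (swap_lt j hlt).mpr hne'
      refine mem_invs.mpr ⟨hslt, ?_⟩
      rw [happ, happ, Equiv.swap_apply_self, Equiv.swap_apply_self]
      exact hinv
    · intro p _ q _ hpq
      have e1 : s p.1 = s q.1 := congrArg Prod.fst hpq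
      have e2 : s p.2 = s q.2 := congrArg Prod.snd hpq
      exact Prod.ext (s.injective e1) (s.injective e2)
  have hcard : ((invs σ).erase (j.castSucc, j.succ)).card = N σ - 1 :=
    Finset.card_erase_of_mem hmemjj
  have hpos : 1 ≤ N σ := Finset.card_pos.mpr ⟨_, hmemjj⟩
  rw [hcard] at hle1 hle2
  omega

lemma le_apply_of_strictMono {m : ℕ} (f : Fin m → Fin m) (h : StrictMono f) (x : Fin m) :
    x ≤ f x := by
  have key : ∀ (k : ℕ) (x : Fin m), (x : ℕ) = k → x ≤ f x := by
    intro k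
    induction k using Nat.strong_induction_on with
    | _ k ih =>
      intro x hx
      by_contra hc
      push_neg at hc
      have hlt : f x < x := hc
      have h2 := ih ((f x : ℕ)) (by rw [← hx]; exact hlt) (f x) rfl
      exact absurd (h hlt) (not_lt.mpr h2)
  exact key (x : ℕ) x rfl

lemma perm_eq_one_of_strictMono {m : ℕ} (σ : Perm (Fin m)) (h : StrictMono (σ : Fin m → Fin m)) :
    σ = 1 := by
  have hsymm : StrictMono (σ.symm : Fin m → Fin m) := by
    intro x y hxy
    by_contra hc
    push_neg at hc
    have := h.monotone hc
    rw [Equiv.apply_symm_apply, Equiv.apply_symm_apply] at this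
    exact absurd hxy (not_lt.mpr this)
  ext x
  have h1 : x ≤ σ x := le_apply_of_strictMono _ h x
  have h2 : σ x ≤ σ.symm (σ x) := le_apply_of_strictMono _ hsymm (σ x)
  rw [Equiv.symm_apply_apply] at h2
  exact le_antisymm h2 h1

lemma exists_word (σ : Perm (Fin (n+1))) :
    ∃ l : List (Fin n), l.length = N σ ∧ (l.map simpleT).prod = σ := by
  generalize hk : N σ = k
  induction k using Nat.strong_induction_on generalizing σ with
  | _ k ih =>
    by_cases hdesc : ∃ j : Fin n, σ j.succ < σ j.castSucc
    · obtain ⟨j, hj⟩ := hdesc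
      have hNeq := N_mul_simpleT σ j hj
      rw [hk] at hNeq
      have hklt : N (σ * simpleT j) < k := by omega
      obtain ⟨l, hl, hp⟩ := ih (N (σ * simpleT j)) hklt (σ * simpleT j) rfl
      refine ⟨l ++ [j], ?_, ?_⟩
      · simp [hl]; omega
      · rw [List.map_append, List.prod_append, hp]
        simp only [List.map_cons, List.map_nil, List.prod_cons, List.prod_nil, mul_one]
        rw [mul_assoc]
        have : simpleT j * simpleT j = 1 := by
          rw [simpleT, Equiv.swap_mul_self]
        rw [this, mul_one]
    · push_neg at hdesc
      have hmono : StrictMono (σ : Fin (n+1) → Fin (n+1)) := by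
        rw [Fin.strictMono_iff_lt_succ]
        intro i
        rcases lt_trichotomy (σ i.castSucc) (σ i.succ) with h | h | h
        · exact h
        · exact absurd (σ.injective h) (ne_of_lt (Fin.castSucc_lt_succ : i.castSucc < i.succ))
        · exact absurd h (not_lt.mpr (hdesc i))
      have hone : σ = 1 := perm_eq_one_of_strictMono σ hmono
      have hN0 : N σ = 0 := by
        rw [N, Finset.card_eq_zero, invs, Finset.filter_eq_empty_iff]
        rintro p -
        rintro ⟨h1, h2⟩
        exact absurd (hmono h1) (asymm h2)
      refine ⟨[], ?_, ?_⟩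
      · simp [← hk, hN0]
      · simp [hone]

lemma invs_simpleT_mul_subset (a : Fin n) (ρ : Perm (Fin (n+1))) :
    invs (simpleT a * ρ) ⊆ insert (ρ.symm a.castSucc, ρ.symm a.succ) (invs ρ) := by
  intro p hp
  obtain ⟨hlt, hinv⟩ := mem_invs.mp hp
  simp only [Perm.mul_apply, simpleT] at hinv
  rcases lt_trichotomy (ρ p.1) (ρ p.2) with h | h | h
  · have h2 : ¬ (Equiv.swap a.castSucc a.succ (ρ p.1) < Equiv.swap a.castSucc a.succ (ρ p.2)) :=
      asymm hinv
    have h3 : ρ p.1 = a.castSucc ∧ ρ p.2 = a.succ := by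
      by_contra hc; exact h2 ((swap_lt a h).mpr hc)
    have hp1 : p.1 = ρ.symm a.castSucc := by rw [← h3.1, Equiv.symm_apply_apply]
    have hp2 : p.2 = ρ.symm a.succ := by rw [← h3.2, Equiv.symm_apply_apply]
    rw [Finset.mem_insert]
    left
    exact Prod.ext hp1 hp2
  · exact absurd (ρ.injective h) (ne_of_lt hlt)
  · exact Finset.mem_insert_of_mem (mem_invs.mpr ⟨hlt, h⟩)

lemma N_simpleT_mul_le (a : Fin n) (ρ : Perm (Fin (n+1))) :
    N (simpleT a * ρ) ≤ N ρ + 1 :=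
  le_trans (Finset.card_le_card (invs_simpleT_mul_subset a ρ)) (Finset.card_insert_le _ _)

lemma N_word_le (l : List (Fin n)) : N ((l.map simpleT).prod) ≤ l.length := by
  induction l with
  | nil =>
    simp only [List.map_nil, List.prod_nil, List.length_nil, Nat.le_zero, N,
      Finset.card_eq_zero, invs]
    rw [Finset.filter_eq_empty_iff]
    rintro p -
    rintro ⟨h1, h2⟩
    simp only [Perm.one_apply] at h2
    exact absurd h2 (asymm h1)
  | cons a l ih =>
    simp only [List.map_cons, List.prod_cons, List.length_cons]
    exact le_trans (N_simpleT_mul_le a _) (by omega)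

lemma len_eq_N (σ : Perm (Fin (n+1))) : len σ = N σ := by
  obtain ⟨l, hl, hp⟩ := exists_word σ
  apply le_antisymm
  · exact Nat.sInf_le ⟨l, hl, hp⟩
  · have hne : {k | ∃ l : List (Fin n), l.length = k ∧ (l.map simpleT).prod = σ}.Nonempty :=
      ⟨N σ, l, hl, hp⟩
    apply le_csInf hne
    rintro b ⟨l', hl', hp'⟩
    calc N σ = N ((l'.map simpleT).prod) := by rw [hp']
    _ ≤ l'.length := N_word_le l'
    _ = b := hl'

lemma exists_consec (w : Perm (Fin (n+1)))
    (i₁ i₂ i₃ : Fin (n+1)) (h12 : i₁ < i₂) (h23 : i₂ < i₃)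
    (hv13 : w i₁ < w i₃) (hv32 : w i₃ < w i₂) :
    ∃ j₁ j₂ j₃ : Fin (n+1), j₁ < j₂ ∧ j₂ < j₃ ∧ w j₁ < w j₃ ∧ w j₃ < w j₂ ∧
      (w j₃ : ℕ) = (w j₁ : ℕ) + 1 := by
  have key : ∀ d : ℕ, ∀ i₁ i₂ i₃ : Fin (n+1), i₁ < i₂ → i₂ < i₃ → w i₁ < w i₃ → w i₃ < w i₂ →
      (w i₃ : ℕ) ≤ (w i₁ : ℕ) + d →
      ∃ j₁ j₂ j₃ : Fin (n+1), j₁ < j₂ ∧ j₂ < j₃ ∧ w j₁ < w j₃ ∧ w j₃ < w j₂ ∧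
        (w j₃ : ℕ) = (w j₁ : ℕ) + 1 := by
    intro d
    induction d with
    | zero =>
      intro i₁ i₂ i₃ h12 h23 hv13 hv32 hgap
      exact absurd (Fin.lt_def.mp hv13) (by omega)
    | succ d ih =>
      intro i₁ i₂ i₃ h12 h23 hv13 hv32 hgap
      by_cases hone : (w i₃ : ℕ) = (w i₁ : ℕ) + 1
      · exact ⟨i₁, i₂, i₃, h12, h23, hv13, hv32, hone⟩
      · have hv13' : (w i₁ : ℕ) < (w i₃ : ℕ) := Fin.lt_def.mp hv13
        have hlt : (w i₁ : ℕ) + 1 < n + 1 := by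
          have := (w i₃).isLt; omega
        set v : Fin (n+1) := ⟨(w i₁ : ℕ) + 1, hlt⟩ with hv
        set m := w.symm v with hm
        have hwm : w m = v := w.apply_symm_apply v
        have hvval : (w m : ℕ) = (w i₁ : ℕ) + 1 := by rw [hwm]
        have hm2 : m ≠ i₂ := by
          intro e
          rw [e] at hvval
          have := Fin.lt_def.mp hv32
          omega
        have hwm3 : w m < w i₃ := by rw [Fin.lt_def]; omega
        rcases lt_or_gt_of_ne hm2 with hlt2 | hgt2
        · exact ih m i₂ i₃ hlt2 h23 hwm3 hv32 (by omega)
        · refine ⟨i₁, i₂, m, h12, hgt2, ?_, lt_trans hwm3 hv32, hvval⟩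
          rw [Fin.lt_def]; omega
  exact key ((w i₃ : ℕ) - (w i₁ : ℕ)) i₁ i₂ i₃ h12 h23 hv13 hv32 (by omega)

end Aux132

open Aux132

/-- The maximal-length element of any parabolic quotient avoids the pattern 132. -/
theorem maximal_element_parabolic_avoids_132 {n : ℕ} (J : Set (Fin n))
    (w : Equiv.Perm (Fin (n+1))) (hw : w ∈ parabolicQuotient J)
    (hmax : ∀ σ ∈ parabolicQuotient J, len σ ≤ len w) :
    ¬ contains132 w := by
  rintro ⟨i₁, i₂, i₃, h12, h23, hv13, hv32⟩
  obtain ⟨j₁, j₂, j₃, h12, h23, h13, h32, hcons⟩ :=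
    exists_consec w i₁ i₂ i₃ h12 h23 hv13 hv32
  have hj1n : (w j₁ : ℕ) < n := by
    have := (w j₃).isLt; omega
  set a : Fin n := ⟨(w j₁ : ℕ), hj1n⟩ with ha
  have hac : a.castSucc = w j₁ := by
    apply Fin.ext; simp [ha]
  have has : a.succ = w j₃ := by
    apply Fin.ext; simp [ha, Fin.val_succ, hcons]
  set σ := simpleT a * w with hσ
  have happ : ∀ x, σ x = Equiv.swap a.castSucc a.succ (w x) := fun x => rfl
  have hmem : σ ∈ parabolicQuotient J := by
    intro i hi
    have hwlt := hw i hi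
    rw [happ, happ, swap_lt a hwlt]
    rintro ⟨e1, e2⟩
    rw [hac] at e1
    rw [has] at e2
    have hej1 : i.castSucc = j₁ := w.injective e1
    have hej3 : i.succ = j₃ := w.injective e2
    have hb1 : (j₁ : ℕ) < (j₂ : ℕ) := Fin.lt_def.mp h12
    have hb2 : (j₂ : ℕ) < (j₃ : ℕ) := Fin.lt_def.mp h23
    have hv1 : (j₁ : ℕ) = (i : ℕ) := by rw [← hej1]; rfl
    have hv3 : (j₃ : ℕ) = (i : ℕ) + 1 := by rw [← hej3]; rfl
    omega
  have e1 : w.symm a.castSucc = j₁ := by rw [hac]; exact w.symm_apply_apply j₁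
  have e2 : w.symm a.succ = j₃ := by rw [has]; exact w.symm_apply_apply j₃
  have h13pos : j₁ < j₃ := lt_trans h12 h23
  have hset : invs σ = insert (j₁, j₃) (invs w) := by
    apply Finset.Subset.antisymm
    · have hsub := invs_simpleT_mul_subset a w
      rwa [e1, e2] at hsub
    · intro p hp
      rcases Finset.mem_insert.mp hp with he | hmemw
      · subst he
        refine mem_invs.mpr ⟨h13pos, ?_⟩
        rw [happ, happ, ← hac, ← has, Equiv.swap_apply_left, Equiv.swap_apply_right]
        exact (Fin.castSucc_lt_succ : a.castSucc < a.succ)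
      · obtain ⟨hlt, hinv⟩ := mem_invs.mp hmemw
        refine mem_invs.mpr ⟨hlt, ?_⟩
        rw [happ, happ, swap_lt a hinv]
        rintro ⟨f1, f2⟩
        rw [hac] at f1
        rw [has] at f2
        have : p.2 = j₁ := w.injective f1
        have : p.1 = j₃ := w.injective f2
        have := Fin.lt_def.mp hlt
        have := Fin.lt_def.mp h13pos
        simp_all
        omega
  have hnotmem : (j₁, j₃) ∉ invs w := by
    rw [mem_invs]
    rintro ⟨-, hcon⟩
    exact absurd hcon (asymm h13)
  have hN : N σ = N w + 1 := by
    rw [N, hset, Finset.card_insert_of_notMem hnotmem]; rfl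
  have hlen := hmax σ hmem
  rw [len_eq_N, len_eq_N, hN] at hlen
  omega
end

section
/- Let π ∈ S_n avoid the pattern 132, let σ ≤ π in the right weak order, and suppose the swap s_i is forbidden, i.e., σs_i is not in the interval [e, π] of the right weak order. Then ℓ(σs_i) = ℓ(σ) + 1, and the set A_i = {σ_k : k > i+1, min(σ_i, σ_{i+1}) < σ_k < max(σ_i, σ_{i+1})} is empty. -/
open Equiv

noncomputable def inv {n : ℕ} (σ : Equiv.Perm (Fin (n+1))) : ℕ :=
  (Finset.univ.filter (fun p : Fin (n+1) × Fin (n+1) => p.1 < p.2 ∧ σ p.2 < σ p.1)).card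

namespace Equiv.Perm

theorem apply_inv_self {α : Type*} (f : Perm α) (x : α) : f (f⁻¹ x) = x :=
  f.apply_symm_apply x

theorem inv_apply_self {α : Type*} (f : Perm α) (x : α) : f⁻¹ (f x) = x :=
  f.symm_apply_apply x

end Equiv.Perm

lemma simpleT_mul_self {n : ℕ} (i : Fin n) : simpleT i * simpleT i = 1 :=
  Equiv.swap_mul_self _ _

lemma simpleT_inv {n : ℕ} (i : Fin n) : (simpleT i)⁻¹ = simpleT i := Equiv.swap_inv _ _

lemma simpleT_simpleT {n : ℕ} (i : Fin n) (z : Fin (n+1)) :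
    simpleT i (simpleT i z) = z := by
  rw [← Perm.mul_apply, simpleT_mul_self, Perm.one_apply]

lemma simpleT_val {n : ℕ} (i : Fin n) (x : Fin (n+1)) :
    ((simpleT i) x : ℕ) =
      if (x : ℕ) = i then (i : ℕ) + 1 else if (x : ℕ) = (i : ℕ) + 1 then i else x := by
  have hci : (i.castSucc : ℕ) = i := rfl
  have hsi : (i.succ : ℕ) = (i : ℕ) + 1 := rfl
  rcases eq_or_ne x i.castSucc with rfl | hx
  · rw [simpleT, Equiv.swap_apply_left, hci, hsi]; split_ifs <;> omega
  · rcases eq_or_ne x i.succ with rfl | hx'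
    · rw [simpleT, Equiv.swap_apply_right, hci, hsi]; split_ifs <;> omega
    · rw [simpleT, Equiv.swap_apply_of_ne_of_ne hx hx']
      have h1 : (x : ℕ) ≠ i := fun h => hx (Fin.ext (h.trans hci.symm))
      have h2 : (x : ℕ) ≠ (i : ℕ) + 1 := fun h => hx' (Fin.ext (h.trans hsi.symm))
      rw [if_neg h1, if_neg h2]

lemma simpleT_lt_iff {n : ℕ} (i : Fin n) {x y : Fin (n+1)}
    (h1 : ¬(x = i.castSucc ∧ y = i.succ)) (h2 : ¬(x = i.succ ∧ y = i.castSucc)) :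
    simpleT i x < simpleT i y ↔ x < y := by
  have hx := simpleT_val i x
  have hy := simpleT_val i y
  have e1 : ¬((x : ℕ) = i ∧ (y : ℕ) = (i : ℕ) + 1) := by
    rintro ⟨ha, hb⟩; exact h1 ⟨Fin.ext ha, Fin.ext hb⟩
  have e2 : ¬((x : ℕ) = (i : ℕ) + 1 ∧ (y : ℕ) = i) := by
    rintro ⟨ha, hb⟩; exact h2 ⟨Fin.ext ha, Fin.ext hb⟩
  rw [Fin.lt_iff_val_lt_val, Fin.lt_iff_val_lt_val]
  split_ifs at hx hy <;> omega

lemma inv_mul_simpleT_asc {n : ℕ} (σ : Equiv.Perm (Fin (n+1))) (i : Fin n)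
    (h : σ i.castSucc < σ i.succ) : inv (σ * simpleT i) = inv σ + 1 := by
  classical
  set T := simpleT i with hT
  have hTT : ∀ z, T (T z) = z := simpleT_simpleT i
  set p₀ : Fin (n+1) × Fin (n+1) := (i.castSucc, i.succ) with hp₀
  have hmemτ : p₀ ∈ Finset.univ.filter
      (fun p : Fin (n+1) × Fin (n+1) => p.1 < p.2 ∧ (σ * T) p.2 < (σ * T) p.1) := by
    simp only [Finset.mem_filter, Finset.mem_univ, true_and, hp₀]
    refine ⟨(Fin.castSucc_lt_succ (i := i)), ?_⟩
    simpa [hT, simpleT, Perm.mul_apply, Equiv.swap_apply_left, Equiv.swap_apply_right] using h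
  rw [inv, ← Finset.card_erase_add_one hmemτ, inv]
  congr 1
  apply Finset.card_nbij' (fun p => (T p.1, T p.2)) (fun p => (T p.1, T p.2))
  · -- erase → filter σ
    rintro ⟨a, b⟩ hq
    rw [Finset.mem_coe, Finset.mem_erase, Finset.mem_filter] at hq
    obtain ⟨hne, -, hab, hinv⟩ := hq
    have hne1 : ¬(a = i.castSucc ∧ b = i.succ) := by
      rintro ⟨rfl, rfl⟩; exact hne rfl
    have hne2 : ¬(a = i.succ ∧ b = i.castSucc) := by
      rintro ⟨rfl, rfl⟩; exact absurd ((Fin.castSucc_lt_succ (i := i))) (not_lt.mpr hab.le)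
    simp only [Finset.mem_coe, Finset.mem_filter, Finset.mem_univ, true_and]
    exact ⟨(simpleT_lt_iff i hne1 hne2).2 hab, hinv⟩
  · -- filter σ → erase
    rintro ⟨a, b⟩ hq
    rw [Finset.mem_coe, Finset.mem_filter] at hq
    obtain ⟨-, hab, hinv⟩ := hq
    have hne1 : ¬(a = i.castSucc ∧ b = i.succ) := by
      rintro ⟨rfl, rfl⟩; exact absurd h (not_lt.mpr hinv.le)
    have hne2 : ¬(a = i.succ ∧ b = i.castSucc) := by
      rintro ⟨rfl, rfl⟩; exact absurd ((Fin.castSucc_lt_succ (i := i))) (not_lt.mpr hab.le)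
    refine Finset.mem_erase.2 ⟨?_, ?_⟩
    · intro hq
      have h1 : T a = i.castSucc := congrArg Prod.fst hq
      have h2 : T b = i.succ := congrArg Prod.snd hq
      have ha : a = T i.castSucc := by rw [← h1, hTT]
      have hb : b = T i.succ := by rw [← h2, hTT]
      rw [hT, simpleT, Equiv.swap_apply_left] at ha
      rw [hT, simpleT, Equiv.swap_apply_right] at hb
      subst ha; subst hb
      exact absurd hab (not_lt.mpr ((Fin.castSucc_lt_succ (i := i))).le)
    · simp only [Finset.mem_coe, Finset.mem_filter, Finset.mem_univ, true_and]
      refine ⟨(simpleT_lt_iff i hne1 hne2).2 hab, ?_⟩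
      show (σ * T) (T b) < (σ * T) (T a)
      simp only [Perm.mul_apply, hTT]
      exact hinv
  · rintro ⟨a, b⟩ _; simp [hTT]
  · rintro ⟨a, b⟩ _; simp [hTT]

lemma inv_mul_simpleT_desc {n : ℕ} (σ : Equiv.Perm (Fin (n+1))) (i : Fin n)
    (h : σ i.succ < σ i.castSucc) : inv σ = inv (σ * simpleT i) + 1 := by
  have h' : (σ * simpleT i) i.castSucc < (σ * simpleT i) i.succ := by
    simp only [Perm.mul_apply, simpleT, Equiv.swap_apply_left, Equiv.swap_apply_right]
    exact h
  have := inv_mul_simpleT_asc (σ * simpleT i) i h'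
  rwa [mul_assoc, simpleT_mul_self, mul_one] at this

lemma ascent_or_descent {n : ℕ} (σ : Equiv.Perm (Fin (n+1))) (i : Fin n) :
    σ i.castSucc < σ i.succ ∨ σ i.succ < σ i.castSucc := by
  rcases lt_or_gt_of_ne (fun e => ((Fin.castSucc_lt_succ (i := i))).ne (σ.injective e)) with h | h
  · exact Or.inl h
  · exact Or.inr h

/-- a strictly monotone permutation is the identity -/
lemma eq_one_of_strictMono {n : ℕ} (σ : Equiv.Perm (Fin (n+1)))
    (hsm : StrictMono ⇑σ) : σ = 1 := by
  have h1 : ∀ x : Fin (n+1), (x : ℕ) ≤ (σ x : ℕ) := by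
    intro x
    induction x using Fin.induction with
    | zero => exact Nat.zero_le _
    | succ j ih =>
      have h2 : (σ j.castSucc : ℕ) < (σ j.succ : ℕ) := hsm ((Fin.castSucc_lt_succ (i := j)))
      have h3 : ((j.succ : Fin (n+1)) : ℕ) = (j : ℕ) + 1 := rfl
      have h4 : ((j.castSucc : Fin (n+1)) : ℕ) = (j : ℕ) := rfl
      omega
  have h2 : ∀ x : Fin (n+1), (σ x : ℕ) ≤ (x : ℕ) := by
    intro x
    induction x using Fin.reverseInduction with
    | last =>
      have := (σ (Fin.last n)).le_last
      simpa [Fin.le_iff_val_le_val] using this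
    | cast j ih =>
      have h2 : (σ j.castSucc : ℕ) < (σ j.succ : ℕ) := hsm ((Fin.castSucc_lt_succ (i := j)))
      have h3 : ((j.succ : Fin (n+1)) : ℕ) = (j : ℕ) + 1 := rfl
      have h4 : ((j.castSucc : Fin (n+1)) : ℕ) = (j : ℕ) := rfl
      omega
  exact Equiv.ext fun x => Fin.ext (le_antisymm (h2 x) (h1 x))

/-- a permutation with no descents is the identity -/
lemma eq_one_of_no_descent {n : ℕ} (σ : Equiv.Perm (Fin (n+1)))
    (h : ∀ i : Fin n, σ i.castSucc < σ i.succ) : σ = 1 :=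
  eq_one_of_strictMono σ (Fin.strictMono_iff_lt_succ.2 h)

lemma inv_perm_one {n : ℕ} : inv (1 : Equiv.Perm (Fin (n+1))) = 0 := by
  rw [inv, Finset.card_eq_zero, Finset.filter_eq_empty_iff]
  rintro ⟨a, b⟩ -
  simp only [Perm.one_apply, not_and, not_lt]
  exact fun h => h.le

lemma exists_word {n : ℕ} : ∀ N (σ : Equiv.Perm (Fin (n+1))), inv σ ≤ N →
    ∃ l : List (Fin n), l.length = inv σ ∧ (l.map simpleT).prod = σ := by
  intro N
  induction N with
  | zero =>
    intro σ hσ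
    by_cases hd : ∃ i : Fin n, σ i.succ < σ i.castSucc
    · obtain ⟨i, hi⟩ := hd
      have := inv_mul_simpleT_desc σ i hi
      omega
    · push_neg at hd
      have h1 : σ = 1 := eq_one_of_no_descent σ (fun i =>
        (ascent_or_descent σ i).resolve_right (not_lt.2 (hd i)))
      subst h1
      exact ⟨[], by simp [inv_perm_one]⟩
  | succ N ih =>
    intro σ hσ
    by_cases hd : ∃ i : Fin n, σ i.succ < σ i.castSucc
    · obtain ⟨i, hi⟩ := hd
      have hdec := inv_mul_simpleT_desc σ i hi
      obtain ⟨l, hl, hp⟩ := ih (σ * simpleT i) (by omega)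
      refine ⟨l ++ [i], ?_, ?_⟩
      · simp [hl]; omega
      · rw [List.map_append, List.prod_append, hp]
        simp [mul_assoc, simpleT_mul_self]
    · push_neg at hd
      have h1 : σ = 1 := eq_one_of_no_descent σ (fun i =>
        (ascent_or_descent σ i).resolve_right (not_lt.2 (hd i)))
      subst h1
      exact ⟨[], by simp [inv_perm_one]⟩

lemma inv_le_word_length {n : ℕ} : ∀ (l : List (Fin n)),
    inv ((l.map simpleT).prod) ≤ l.length := by
  intro l
  induction l using List.reverseRecOn with
  | nil => simp [inv_perm_one]
  | append_singleton l i ih =>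
    rw [List.map_append, List.prod_append]
    simp only [List.map_cons, List.map_nil, List.prod_cons, List.prod_nil, mul_one,
      List.length_append, List.length_singleton]
    set τ := (l.map simpleT).prod
    rcases ascent_or_descent τ i with h | h
    · rw [inv_mul_simpleT_asc τ i h]; omega
    · have := inv_mul_simpleT_desc τ i h; omega

lemma len_eq_inv {n : ℕ} (σ : Equiv.Perm (Fin (n+1))) : len σ = inv σ := by
  obtain ⟨l, hl, hp⟩ := exists_word (inv σ) σ le_rfl
  have hne : (inv σ) ∈ {k | ∃ l : List (Fin n), l.length = k ∧ (l.map simpleT).prod = σ} :=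
    ⟨l, hl, hp⟩
  refine le_antisymm (Nat.sInf_le hne) ?_
  obtain ⟨l', hl', hp'⟩ := Nat.sInf_mem (Set.nonempty_of_mem hne)
  calc inv σ = inv ((l'.map simpleT).prod) := by rw [hp']
    _ ≤ l'.length := inv_le_word_length l'
    _ = len σ := hl'

/-- the (value-pair) inversion relation -/
def invV {n : ℕ} (σ : Equiv.Perm (Fin (n+1))) (a b : Fin (n+1)) : Prop :=
  a < b ∧ σ⁻¹ b < σ⁻¹ a

lemma mul_simpleT_inv_apply {n : ℕ} (σ : Equiv.Perm (Fin (n+1))) (i : Fin n) (z : Fin (n+1)) :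
    (σ * simpleT i)⁻¹ z = simpleT i (σ⁻¹ z) := by
  rw [mul_inv_rev, simpleT_inv, Perm.mul_apply]

lemma invV_mul_simpleT {n : ℕ} (σ : Equiv.Perm (Fin (n+1))) (i : Fin n)
    (h : σ i.castSucc < σ i.succ) (a b : Fin (n+1)) :
    invV (σ * simpleT i) a b ↔ invV σ a b ∨ (a = σ i.castSucc ∧ b = σ i.succ) := by
  unfold invV
  rw [mul_simpleT_inv_apply, mul_simpleT_inv_apply]
  by_cases hA : σ⁻¹ a = i.castSucc ∧ σ⁻¹ b = i.succ
  · obtain ⟨h1, h2⟩ := hA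
    have ha : a = σ i.castSucc := by rw [← h1, Perm.apply_inv_self]
    have hb : b = σ i.succ := by rw [← h2, Perm.apply_inv_self]
    constructor
    · rintro ⟨hab, -⟩; exact Or.inr ⟨ha, hb⟩
    · rintro -
      refine ⟨ha ▸ hb ▸ h, ?_⟩
      rw [h1, h2, simpleT, Equiv.swap_apply_left, Equiv.swap_apply_right]
      exact (Fin.castSucc_lt_succ (i := i))
  · by_cases hB : σ⁻¹ a = i.succ ∧ σ⁻¹ b = i.castSucc
    · obtain ⟨h1, h2⟩ := hB
      have ha : a = σ i.succ := by rw [← h1, Perm.apply_inv_self]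
      have hb : b = σ i.castSucc := by rw [← h2, Perm.apply_inv_self]
      have hba : b < a := ha ▸ hb ▸ h
      constructor
      · rintro ⟨hab, -⟩; exact absurd hab (not_lt.2 hba.le)
      · rintro (⟨hab, -⟩ | ⟨ha', hb'⟩)
        · exact absurd hab (not_lt.2 hba.le)
        · exfalso
          have : σ i.succ = σ i.castSucc := by rw [← ha, ha']
          exact ((Fin.castSucc_lt_succ (i := i))).ne (σ.injective this.symm)
    · have c1 : ¬(σ⁻¹ b = i.castSucc ∧ σ⁻¹ a = i.succ) := fun ⟨u, v⟩ => hB ⟨v, u⟩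
      have c2 : ¬(σ⁻¹ b = i.succ ∧ σ⁻¹ a = i.castSucc) := fun ⟨u, v⟩ => hA ⟨v, u⟩
      constructor
      · rintro ⟨hab, hlt⟩
        exact Or.inl ⟨hab, (simpleT_lt_iff i c1 c2).1 hlt⟩
      · rintro (⟨hab, hlt⟩ | ⟨rfl, rfl⟩)
        · exact ⟨hab, (simpleT_lt_iff i c1 c2).2 hlt⟩
        · exact absurd ⟨by simp, by simp⟩ hA

/-- Cover relation of the right weak Bruhat order. -/
def weakCov {n : ℕ} (σ τ : Equiv.Perm (Fin (n+1))) : Prop :=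
  ∃ i : Fin n, τ = σ * simpleT i ∧ len τ = len σ + 1

/-- The right weak Bruhat order. -/
def weakLE {n : ℕ} : Equiv.Perm (Fin (n+1)) → Equiv.Perm (Fin (n+1)) → Prop :=
  Relation.ReflTransGen weakCov

lemma weakCov_ascent {n : ℕ} {σ τ : Equiv.Perm (Fin (n+1))} (h : weakCov σ τ) :
    ∃ i : Fin n, τ = σ * simpleT i ∧ σ i.castSucc < σ i.succ := by
  obtain ⟨i, rfl, hlen⟩ := h
  refine ⟨i, rfl, ?_⟩
  rcases ascent_or_descent σ i with h | h
  · exact h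
  · exfalso
    have := inv_mul_simpleT_desc σ i h
    rw [len_eq_inv, len_eq_inv] at hlen
    omega

lemma invV_subset_of_weakLE {n : ℕ} {σ π : Equiv.Perm (Fin (n+1))} (h : weakLE σ π) :
    ∀ a b, invV σ a b → invV π a b := by
  induction h with
  | refl => exact fun a b h => h
  | tail hab hcov ih =>
    intro a b hv
    obtain ⟨i, rfl, hasc⟩ := weakCov_ascent hcov
    exact (invV_mul_simpleT _ i hasc a b).2 (Or.inl (ih a b hv))

lemma eq_of_invV_iff {n : ℕ} {σ π : Equiv.Perm (Fin (n+1))}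
    (h : ∀ a b, invV σ a b ↔ invV π a b) : σ = π := by
  have hsm : StrictMono ⇑(σ⁻¹ * π) := by
    intro x y hxy
    show σ⁻¹ (π x) < σ⁻¹ (π y)
    have hab : π x ≠ π y := fun e => hxy.ne (π.injective e)
    rcases lt_or_gt_of_ne hab with hl | hl
    · have hnot : ¬ invV π (π x) (π y) := by
        rintro ⟨-, hlt⟩
        rw [Perm.inv_apply_self, Perm.inv_apply_self] at hlt
        exact absurd hxy (not_lt.2 hlt.le)
      have : ¬ invV σ (π x) (π y) := fun hs => hnot ((h _ _).1 hs)
      rcases lt_trichotomy (σ⁻¹ (π x)) (σ⁻¹ (π y)) with h1 | h1 | h1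
      · exact h1
      · exact absurd (σ⁻¹.injective h1) hab
      · exact absurd ⟨hl, h1⟩ this
    · have : invV π (π y) (π x) := by
        refine ⟨hl, ?_⟩
        rw [Perm.inv_apply_self, Perm.inv_apply_self]
        exact hxy
      exact ((h _ _).2 this).2
  have h1 : σ⁻¹ * π = 1 := eq_one_of_strictMono _ hsm
  exact inv_mul_eq_one.mp h1

lemma exists_ascent {n : ℕ} {σ π : Equiv.Perm (Fin (n+1))}
    (hsub : ∀ a b, invV σ a b → invV π a b) :
    ∀ (d : ℕ) (a b : Fin (n+1)), invV π a b → ¬ invV σ a b →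
      ((σ⁻¹ b : ℕ) - (σ⁻¹ a : ℕ)) ≤ d →
    ∃ i : Fin n, σ i.castSucc < σ i.succ ∧ invV π (σ i.castSucc) (σ i.succ) := by
  intro d
  induction d with
  | zero =>
    intro a b hπab hσab hd
    obtain ⟨hab, -⟩ := hπab
    exfalso
    have hpq : σ⁻¹ a < σ⁻¹ b := by
      rcases lt_trichotomy (σ⁻¹ a) (σ⁻¹ b) with h1 | h1 | h1
      · exact h1
      · exact absurd (σ⁻¹.injective h1) hab.ne
      · exact absurd ⟨hab, h1⟩ hσab
    have : ((σ⁻¹ a : Fin (n+1)) : ℕ) < (σ⁻¹ b : ℕ) := hpq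
    omega
  | succ d ih =>
    intro a b hπab hσab hd
    obtain ⟨hab, hba⟩ := hπab
    have hpq : σ⁻¹ a < σ⁻¹ b := by
      rcases lt_trichotomy (σ⁻¹ a) (σ⁻¹ b) with h1 | h1 | h1
      · exact h1
      · exact absurd (σ⁻¹.injective h1) hab.ne
      · exact absurd ⟨hab, h1⟩ hσab
    have hpv : ((σ⁻¹ a : Fin (n+1)) : ℕ) < (σ⁻¹ b : ℕ) := hpq
    have hqle : ((σ⁻¹ b : Fin (n+1)) : ℕ) ≤ n := Nat.lt_succ_iff.mp (σ⁻¹ b).isLt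
    by_cases hadj : ((σ⁻¹ b : Fin (n+1)) : ℕ) = (σ⁻¹ a : ℕ) + 1
    · -- adjacent positions
      have hpn : ((σ⁻¹ a : Fin (n+1)) : ℕ) < n := by omega
      refine ⟨⟨(σ⁻¹ a : ℕ), hpn⟩, ?_, ?_⟩ <;>
      · have e1 : (⟨(σ⁻¹ a : ℕ), hpn⟩ : Fin n).castSucc = σ⁻¹ a := Fin.ext rfl
        have e2 : (⟨(σ⁻¹ a : ℕ), hpn⟩ : Fin n).succ = σ⁻¹ b := Fin.ext (by
          simp only [Fin.val_succ]; omega)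
        rw [e1, e2, Perm.apply_inv_self, Perm.apply_inv_self]
        first
        | exact hab
        | exact ⟨hab, hba⟩
    · -- there is an intermediate position
      set m : Fin (n+1) := ⟨(σ⁻¹ a : ℕ) + 1, by omega⟩ with hm
      set c := σ m with hc
      have hσc : σ⁻¹ c = m := Perm.inv_apply_self σ m
      have hmv : (m : ℕ) = (σ⁻¹ a : ℕ) + 1 := rfl
      have hmp : σ⁻¹ a < m := by
        rw [Fin.lt_iff_val_lt_val, hmv]; omega
      have hmq : m < σ⁻¹ b := by
        rw [Fin.lt_iff_val_lt_val, hmv]; omega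
      have hca : c ≠ a := fun e => hmp.ne (by rw [← hσc, e])
      have hcb : c ≠ b := fun e => hmq.ne (by rw [← hσc, e])
      rcases lt_trichotomy c a with h1 | h1 | h1
      · -- c < a
        have h2 : invV π c a := hsub c a ⟨h1, by rw [hσc]; exact hmp⟩
        have h3 : invV π c b := ⟨h1.trans hab, hba.trans h2.2⟩
        have h4 : ¬ invV σ c b := by
          rintro ⟨-, hlt⟩
          rw [hσc] at hlt
          exact absurd hmq (not_lt.2 hlt.le)
        refine ih c b h3 h4 ?_
        rw [hσc]
        omega
      · exact absurd h1 hca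
      · rcases lt_trichotomy c b with h2 | h2 | h2
        · -- a < c < b
          rcases lt_or_ge (π⁻¹ c) (π⁻¹ a) with h3 | h3
          · have h4 : invV π a c := ⟨h1, h3⟩
            have h5 : ¬ invV σ a c := by
              rintro ⟨-, hlt⟩
              rw [hσc] at hlt
              exact absurd hmp (not_lt.2 hlt.le)
            refine ih a c h4 h5 ?_
            rw [hσc]
            omega
          · have h4 : invV π c b := ⟨h2, lt_of_lt_of_le hba h3⟩
            have h5 : ¬ invV σ c b := by
              rintro ⟨-, hlt⟩
              rw [hσc] at hlt
              exact absurd hmq (not_lt.2 hlt.le)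
            refine ih c b h4 h5 ?_
            rw [hσc]
            omega
        · exact absurd h2 hcb
        · -- b < c
          have h3 : invV π b c := hsub b c ⟨h2, by rw [hσc]; exact hmq⟩
          have h4 : invV π a c := ⟨hab.trans h2, h3.2.trans hba⟩
          have h5 : ¬ invV σ a c := by
            rintro ⟨-, hlt⟩
            rw [hσc] at hlt
            exact absurd hmp (not_lt.2 hlt.le)
          refine ih a c h4 h5 ?_
          rw [hσc]
          omega

instance {n : ℕ} (σ : Equiv.Perm (Fin (n+1))) (a b : Fin (n+1)) : Decidable (invV σ a b) :=
  inferInstanceAs (Decidable (_ ∧ _))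

def invVF {n : ℕ} (σ : Equiv.Perm (Fin (n+1))) : Finset (Fin (n+1) × Fin (n+1)) :=
  Finset.univ.filter (fun p => invV σ p.1 p.2)

lemma mem_invVF {n : ℕ} (σ : Equiv.Perm (Fin (n+1))) (p : Fin (n+1) × Fin (n+1)) :
    p ∈ invVF σ ↔ invV σ p.1 p.2 := by simp [invVF]

lemma weakLE_of_invV_subset {n : ℕ} {π : Equiv.Perm (Fin (n+1))} :
    ∀ (N : ℕ) (σ : Equiv.Perm (Fin (n+1))), (invVF π \ invVF σ).card ≤ N →
      (∀ a b, invV σ a b → invV π a b) → weakLE σ π := by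
  intro N
  induction N with
  | zero =>
    intro σ hcard hsub
    have hempty : invVF π \ invVF σ = ∅ := Finset.card_eq_zero.mp (Nat.le_zero.mp hcard)
    have hsub2 : invVF π ⊆ invVF σ := Finset.sdiff_eq_empty_iff_subset.mp hempty
    have : σ = π := by
      apply eq_of_invV_iff
      intro a b
      constructor
      · exact hsub a b
      · intro h
        exact (mem_invVF σ (a, b)).1 (hsub2 ((mem_invVF π (a, b)).2 h))
    rw [this]
    exact Relation.ReflTransGen.refl
  | succ N ih =>
    intro σ hcard hsub
    by_cases hempty : invVF π \ invVF σ = ∅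
    · have hsub2 : invVF π ⊆ invVF σ := Finset.sdiff_eq_empty_iff_subset.mp hempty
      have : σ = π := by
        apply eq_of_invV_iff
        intro a b
        exact ⟨hsub a b, fun h => (mem_invVF σ (a, b)).1 (hsub2 ((mem_invVF π (a, b)).2 h))⟩
      rw [this]
      exact Relation.ReflTransGen.refl
    · obtain ⟨⟨a, b⟩, hmem⟩ := Finset.nonempty_iff_ne_empty.mpr hempty
      rw [Finset.mem_sdiff, mem_invVF, mem_invVF] at hmem
      obtain ⟨hπab, hσab⟩ := hmem
      obtain ⟨i, hasc, hπpair⟩ :=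
        exists_ascent hsub ((σ⁻¹ b : ℕ) - (σ⁻¹ a : ℕ)) a b hπab hσab le_rfl
      have hiff := invV_mul_simpleT σ i hasc
      have hsub' : ∀ a b, invV (σ * simpleT i) a b → invV π a b := by
        intro a b h
        rcases (hiff a b).1 h with h | ⟨rfl, rfl⟩
        · exact hsub a b h
        · exact hπpair
      have hpairnot : ¬ invV σ (σ i.castSucc) (σ i.succ) := by
        rintro ⟨-, hlt⟩
        rw [Perm.inv_apply_self, Perm.inv_apply_self] at hlt
        exact absurd ((Fin.castSucc_lt_succ (i := i))) (not_lt.2 hlt.le)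
      have hF : invVF (σ * simpleT i) = insert (σ i.castSucc, σ i.succ) (invVF σ) := by
        ext ⟨a, b⟩
        rw [mem_invVF, Finset.mem_insert, mem_invVF, hiff a b]
        constructor
        · rintro (h | ⟨rfl, rfl⟩)
          · exact Or.inr h
          · exact Or.inl rfl
        · rintro (h | h)
          · exact Or.inr ⟨congrArg Prod.fst h, congrArg Prod.snd h⟩
          · exact Or.inl h
      have hpairdiff : (σ i.castSucc, σ i.succ) ∈ invVF π \ invVF σ := by
        rw [Finset.mem_sdiff, mem_invVF, mem_invVF]
        exact ⟨hπpair, hpairnot⟩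
      have hcard' : (invVF π \ invVF (σ * simpleT i)).card ≤ N := by
        rw [hF, Finset.sdiff_insert]
        have := Finset.card_erase_of_mem hpairdiff
        omega
      have hcov : weakCov σ (σ * simpleT i) := by
        refine ⟨i, rfl, ?_⟩
        rw [len_eq_inv, len_eq_inv, inv_mul_simpleT_asc σ i hasc]
      exact Relation.ReflTransGen.head hcov (ih (σ * simpleT i) hcard' hsub')

/-- If `π` avoids 132, `σ ≤ π` in the right weak order, and the swap `sᵢ` is forbidden
(`σ sᵢ ∉ [e, π]`), then `ℓ(σ sᵢ) = ℓ(σ) + 1` and the set `Aᵢ` is empty. -/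
theorem forbidden_swap_length_and_A_empty {n : ℕ} (π σ : Equiv.Perm (Fin (n+1)))
    (i : Fin n) (hπ : ¬ contains132 π) (hσπ : weakLE σ π)
    (hforb : ¬ weakLE (σ * simpleT i) π) :
    len (σ * simpleT i) = len σ + 1 ∧
      ∀ k : Fin (n+1), (i : ℕ) + 1 < (k : ℕ) →
        ¬(min (σ i.castSucc) (σ i.succ) < σ k ∧ σ k < max (σ i.castSucc) (σ i.succ)) := by
  have hasc : σ i.castSucc < σ i.succ := by
    rcases ascent_or_descent σ i with h | h
    · exact h
    · exfalso
      have hcov : weakCov (σ * simpleT i) σ := by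
        refine ⟨i, ?_, ?_⟩
        · rw [mul_assoc, simpleT_mul_self, mul_one]
        · rw [len_eq_inv, len_eq_inv]
          exact inv_mul_simpleT_desc σ i h
      exact hforb (Relation.ReflTransGen.head hcov hσπ)
  refine ⟨by rw [len_eq_inv, len_eq_inv, inv_mul_simpleT_asc σ i hasc], ?_⟩
  rintro k hk ⟨hmin, hmax⟩
  rw [min_eq_left hasc.le] at hmin
  rw [max_eq_right hasc.le] at hmax
  have hik : i.succ < k := by
    rw [Fin.lt_iff_val_lt_val]
    exact hk
  have hsubV := invV_subset_of_weakLE hσπ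
  have hV : invV σ (σ k) (σ i.succ) := by
    refine ⟨hmax, ?_⟩
    rw [Perm.inv_apply_self, Perm.inv_apply_self]
    exact hik
  have hVπ := hsubV _ _ hV
  by_cases hp : invV π (σ i.castSucc) (σ i.succ)
  · apply hforb
    apply weakLE_of_invV_subset (invVF π \ invVF (σ * simpleT i)).card (σ * simpleT i) le_rfl
    intro a b h
    rcases (invV_mul_simpleT σ i hasc a b).1 h with h | ⟨rfl, rfl⟩
    · exact hsubV a b h
    · exact hp
  · have hπlt : π⁻¹ (σ i.castSucc) < π⁻¹ (σ i.succ) := by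
      rcases lt_trichotomy (π⁻¹ (σ i.castSucc)) (π⁻¹ (σ i.succ)) with h1 | h1 | h1
      · exact h1
      · exfalso
        exact ((Fin.castSucc_lt_succ (i := i))).ne (σ.injective (π⁻¹.injective h1))
      · exact absurd ⟨hasc, h1⟩ hp
    apply hπ
    refine ⟨π⁻¹ (σ i.castSucc), π⁻¹ (σ i.succ), π⁻¹ (σ k), hπlt, hVπ.2, ?_, ?_⟩
    · rw [Perm.apply_inv_self, Perm.apply_inv_self]
      exact hmin
    · rw [Perm.apply_inv_self, Perm.apply_inv_self]
      exact hmax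
end

section
/- Let π ∈ S_n avoid the pattern 132, let σ ≤ π in the right weak order, and suppose σs_i is not ≤ π in the right weak order. Then the set B_i = {σ_k : k > i+1, min(π⁻¹σ_i, π⁻¹σ_{i+1}) < π⁻¹σ_k < max(π⁻¹σ_i, π⁻¹σ_{i+1})} is empty. -/
open Equiv

/-- The inversion set of `σ`: pairs of values `(σ i, σ j)` with `i < j` and `σ i > σ j`. -/
def invSet {m : ℕ} (σ : Equiv.Perm (Fin m)) : Set (Fin m × Fin m) :=
  {p | ∃ i j : Fin m, i < j ∧ σ j < σ i ∧ p = (σ i, σ j)}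

/-- The right weak Bruhat order, characterized by containment of inversion sets. -/
def wle {m : ℕ} (σ π : Equiv.Perm (Fin m)) : Prop := invSet σ ⊆ invSet π

lemma mem_invSet {m : ℕ} (σ : Equiv.Perm (Fin m)) (u v : Fin m) :
    (u, v) ∈ invSet σ ↔ σ.symm u < σ.symm v ∧ v < u := by
  constructor
  · rintro ⟨a, b, hab, hba, h⟩
    rw [Prod.ext_iff] at h
    obtain ⟨h1, h2⟩ := h
    subst h1; subst h2
    simp [hab, hba]
  · rintro ⟨h1, h2⟩
    exact ⟨σ.symm u, σ.symm v, h1, by simp [h2], by simp⟩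

lemma swap_adj_coe {n : ℕ} (i : Fin n) (z : Fin (n+1)) :
    ((Equiv.swap i.castSucc i.succ) z : ℕ) =
      if (z : ℕ) = (i : ℕ) then (i : ℕ) + 1 else if (z : ℕ) = (i : ℕ) + 1 then (i : ℕ) else z := by
  rcases eq_or_ne z i.castSucc with h | h
  · subst h
    rw [Equiv.swap_apply_left]
    simp [Fin.coe_castSucc, Fin.val_succ]
  · rcases eq_or_ne z i.succ with h2 | h2
    · subst h2
      rw [Equiv.swap_apply_right]
      simp [Fin.coe_castSucc, Fin.val_succ]
    · rw [Equiv.swap_apply_of_ne_of_ne h h2]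
      have h' : (z : ℕ) ≠ (i : ℕ) := fun hh => h (Fin.ext hh)
      have h2' : (z : ℕ) ≠ (i : ℕ) + 1 := fun hh => h2 (Fin.ext hh)
      simp [h', h2']

lemma swap_adj_lt {n : ℕ} (i : Fin n) {x y : Fin (n+1)} (h : x < y)
    (hne : ¬(x = i.castSucc ∧ y = i.succ)) :
    Equiv.swap i.castSucc i.succ x < Equiv.swap i.castSucc i.succ y := by
  have hne' : ¬((x : ℕ) = (i : ℕ) ∧ (y : ℕ) = (i : ℕ) + 1) := by
    intro ⟨h1, h2⟩; exact hne ⟨Fin.ext h1, Fin.ext h2⟩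
  rw [Fin.lt_def] at h ⊢
  rw [swap_adj_coe, swap_adj_coe]
  split_ifs <;> omega

lemma simpleT_apply {n : ℕ} (σ : Equiv.Perm (Fin (n+1))) (i : Fin n) (x : Fin (n+1)) :
    (σ * simpleT i) x = σ (Equiv.swap i.castSucc i.succ x) := rfl

/-- If `π` avoids 132, `σ ≤ π` in the right weak order, and `σ sᵢ ≰ π`, then the set
`Bᵢ = {σ_k : k > i+1, min(π⁻¹σᵢ, π⁻¹σᵢ₊₁) < π⁻¹σ_k < max(π⁻¹σᵢ, π⁻¹σᵢ₊₁)}` is empty. -/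
theorem forbidden_swap_B_empty {n : ℕ} (π σ : Equiv.Perm (Fin (n+1))) (i : Fin n)
    (hπ : ¬ contains132 π) (hσπ : wle σ π) (hforb : ¬ wle (σ * simpleT i) π) :
    ∀ k : Fin (n+1), (i : ℕ) + 1 < (k : ℕ) →
      ¬(min (π.symm (σ i.castSucc)) (π.symm (σ i.succ)) < π.symm (σ k) ∧
        π.symm (σ k) < max (π.symm (σ i.castSucc)) (π.symm (σ i.succ))) := by
  have hpq : i.castSucc < i.succ := Fin.castSucc_lt_succ
  -- Step 1: σ(i) < σ(i+1)
  have hab : σ i.castSucc < σ i.succ := by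
    rcases lt_or_gt_of_ne (fun h => (ne_of_lt hpq) (σ.injective h)) with h | h
    · exact h
    · exfalso
      apply hforb
      rintro ⟨u, v⟩ ⟨x, y, hxy, hyx, huv⟩
      rw [Prod.ext_iff] at huv
      obtain ⟨hu, hv⟩ := huv
      subst hu; subst hv
      apply hσπ
      rw [simpleT_apply, simpleT_apply] at hyx ⊢
      rw [mem_invSet]
      refine ⟨?_, hyx⟩
      simp only [Equiv.symm_apply_apply]
      apply swap_adj_lt i hxy
      rintro ⟨hxp, hyq⟩
      subst hxp; subst hyq
      rw [Equiv.swap_apply_left, Equiv.swap_apply_right] at hyx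
      exact absurd hyx (asymm h)
  -- Step 2: extract the offending inversion from hforb: it must be (σ(i+1), σ(i))
  have hAB : π.symm (σ i.castSucc) < π.symm (σ i.succ) := by
    rw [wle, Set.not_subset] at hforb
    obtain ⟨uv, huv1, huv2⟩ := hforb
    obtain ⟨x, y, hxy, hyx, huv⟩ := huv1
    subst huv
    rw [simpleT_apply, simpleT_apply] at hyx huv2
    by_cases hc : x = i.castSucc ∧ y = i.succ
    · obtain ⟨hx, hy⟩ := hc
      subst hx; subst hy
      rw [Equiv.swap_apply_left, Equiv.swap_apply_right] at hyx huv2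
      rw [mem_invSet] at huv2
      have hnlt : ¬(π.symm (σ i.succ) < π.symm (σ i.castSucc)) := fun h => huv2 ⟨h, hab⟩
      refine lt_of_le_of_ne (le_of_not_gt hnlt) ?_
      intro h
      exact (ne_of_lt hab) (π.symm.injective h)
    · exfalso
      apply huv2
      apply hσπ
      rw [mem_invSet]
      refine ⟨?_, hyx⟩
      simp only [Equiv.symm_apply_apply]
      exact swap_adj_lt i hxy hc
  -- Main argument
  intro k hk ⟨h1, h2⟩
  rw [min_eq_left (le_of_lt hAB)] at h1
  rw [max_eq_right (le_of_lt hAB)] at h2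
  have hkq : i.succ < k := by rw [Fin.lt_def]; exact hk
  have hck : σ k ≠ σ i.succ := fun h => (ne_of_lt hkq).symm (σ.injective h)
  rcases lt_or_gt_of_ne hck with h | h
  · -- σ k < σ(i+1): then (σ(i+1), σ k) is an inversion of σ, hence of π
    have hmem : (σ i.succ, σ k) ∈ invSet π := hσπ ⟨i.succ, k, hkq, h, rfl⟩
    rw [mem_invSet] at hmem
    exact absurd hmem.1 (asymm h2)
  · -- σ(i+1) < σ k: 132 pattern in π
    exact hπ ⟨π.symm (σ i.castSucc), π.symm (σ k), π.symm (σ i.succ), h1, h2,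
      by simpa using hab, by simpa using h⟩
end

section
/- Let π ∈ S_n avoid 132 and let σ ≤ π in the right weak order. Fix k and define points P_i = (σ_i, π⁻¹σ_i) for i = 1, ..., n. Then no point P_i with i < k satisfies both σ_i > σ_k and π⁻¹σ_i > π⁻¹σ_k (i.e., no point of the permutation path lies strictly in 'Quadrant I' relative to P_k). -/
open Equiv

/-- No point of the permutation path lies strictly in Quadrant I relative to
`(σ_k, π⁻¹σ_k)`. -/
theorem no_point_in_quadrant_I {n : ℕ} (π σ : Equiv.Perm (Fin n))
    (hπ : ¬ contains132 π) (hσπ : wle σ π) (k : Fin n) :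
    ∀ i : Fin n, i < k → ¬(σ k < σ i ∧ π.symm (σ k) < π.symm (σ i)) := by
  rintro i hik ⟨h1, h2⟩
  obtain ⟨a, b, hab, hba, heq⟩ := hσπ ⟨i, k, hik, h1, rfl⟩
  have ha : σ i = π a := congrArg Prod.fst heq
  have hb : σ k = π b := congrArg Prod.snd heq
  rw [ha, hb, Equiv.symm_apply_apply, Equiv.symm_apply_apply] at h2
  exact absurd hab (not_lt.mpr h2.le)
end

section
/- Let V be a finite-dimensional complex vector space and let E, H ∈ End(V). There is at most one F ∈ End(V) such that the assignment e ↦ E, f ↦ F, h ↦ H defines a representation of sl_2(ℂ) on V (i.e., such that EF - FE = H, HE - EH = 2E, HF - FH = -2F). -/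
/-- Given `E, H ∈ End(V)` with `V` finite-dimensional, there is at most one `F` making
`(E, F, H)` an `𝔰𝔩₂(ℂ)`-triple. -/
theorem sl2_lowering_operator_unique
    (V : Type*) [AddCommGroup V] [Module ℂ V] [FiniteDimensional ℂ V]
    (E H F₁ F₂ : Module.End ℂ V)
    (hEF₁ : E * F₁ - F₁ * E = H)
    (hHE₁ : H * E - E * H = (2 : ℂ) • E)
    (hHF₁ : H * F₁ - F₁ * H = (-2 : ℂ) • F₁)
    (hEF₂ : E * F₂ - F₂ * E = H)
    (hHF₂ : H * F₂ - F₂ * H = (-2 : ℂ) • F₂) :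
    F₁ = F₂ := by
  -- iterated brackets with F₁ of D = F₁ - F₂
  let x : ℕ → Module.End ℂ V := fun k => Nat.rec (F₁ - F₂) (fun _ y => F₁ * y - y * F₁) k
  have hx0 : x 0 = F₁ - F₂ := rfl
  have hxs : ∀ k, x (k + 1) = F₁ * x k - x k * F₁ := fun k => rfl
  -- weight of x k under ad H is -2 - 2k
  have hH : ∀ k, H * x k - x k * H = (-2 - 2 * (k : ℂ)) • x k := by
    intro k
    induction k with
    | zero =>
      have h1 : H * (F₁ - F₂) - (F₁ - F₂) * H
          = (H * F₁ - F₁ * H) - (H * F₂ - F₂ * H) := by noncomm_ring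
      rw [hx0, h1, hHF₁, hHF₂, Nat.cast_zero]
      module
    | succ k ih =>
      rw [hxs]
      have key : H * (F₁ * x k - x k * F₁) - (F₁ * x k - x k * F₁) * H
          = (H * F₁ - F₁ * H) * x k - x k * (H * F₁ - F₁ * H)
            + (F₁ * (H * x k - x k * H) - (H * x k - x k * H) * F₁) := by
        noncomm_ring
      rw [key, hHF₁, ih]
      simp only [smul_sub, mul_smul_comm, smul_mul_assoc]
      push_cast
      match_scalars <;> ring
  -- bracket with E lowers k, with nonzero coefficient
  have hE : ∀ k, E * x k - x k * E = (-(k : ℂ) * ((k : ℂ) + 1)) • x (k - 1) := by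
    intro k
    induction k with
    | zero =>
      have h1 : E * (F₁ - F₂) - (F₁ - F₂) * E
          = (E * F₁ - F₁ * E) - (E * F₂ - F₂ * E) := by noncomm_ring
      rw [hx0, h1, hEF₁, hEF₂, sub_self, Nat.cast_zero, neg_zero, zero_mul, zero_smul]
    | succ k ih =>
      rw [hxs]
      have key : E * (F₁ * x k - x k * F₁) - (F₁ * x k - x k * F₁) * E
          = (E * F₁ - F₁ * E) * x k - x k * (E * F₁ - F₁ * E)
            + (F₁ * (E * x k - x k * E) - (E * x k - x k * E) * F₁) := by
        noncomm_ring
      rw [key, hEF₁, hH k, ih, Nat.add_sub_cancel]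
      cases k with
      | zero =>
        simp only [Nat.cast_zero, Nat.cast_one, neg_zero, zero_mul, zero_smul,
          mul_zero, zero_mul, sub_zero, mul_zero, Nat.cast_ofNat]
        push_cast
        match_scalars <;> ring
      | succ m =>
        rw [Nat.add_sub_cancel, hxs]
        simp only [smul_sub, mul_smul_comm, smul_mul_assoc]
        push_cast
        match_scalars <;> ring
  -- ad H as an endomorphism of End V
  let adH : Module.End ℂ (Module.End ℂ V) := LinearMap.mulLeft ℂ H - LinearMap.mulRight ℂ H
  have hadH : ∀ y : Module.End ℂ V, adH y = H * y - y * H := fun y => rfl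
  -- some x k must vanish, else infinitely many independent eigenvectors
  have hexists : ∃ k, x k = 0 := by
    by_contra hcon
    rw [not_exists] at hcon
    have heig : ∀ k : ℕ, adH.HasEigenvector (-2 - 2 * (k : ℂ)) (x k) := by
      intro k
      refine ⟨?_, hcon k⟩
      rw [Module.End.mem_eigenspace_iff, hadH, hH]
    have hinj : Function.Injective (fun k : ℕ => (-2 - 2 * (k : ℂ))) := by
      intro a b hab
      simp only at hab
      have : (a : ℂ) = b := by linear_combination -hab / 2
      exact_mod_cast this
    have hli : LinearIndependent ℂ x :=
      adH.eigenvectors_linearIndependent' _ hinj _ heig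
    have hli' : LinearIndependent ℂ
        fun i : Fin (Module.finrank ℂ (Module.End ℂ V) + 1) => x i :=
      hli.comp Fin.val Fin.val_injective
    have := hli'.fintype_card_le_finrank
    simp at this
  -- downward induction: the least vanishing index is 0
  obtain ⟨k, hk⟩ := hexists
  have hzero : ∀ k, x k = 0 → x 0 = 0 := by
    intro k
    induction k with
    | zero => exact fun h => h
    | succ k ih =>
      intro h
      apply ih
      have h2 := hE (k + 1)
      rw [h, Nat.add_sub_cancel] at h2
      have h3 : (0 : Module.End ℂ V) = (-((k : ℂ) + 1) * ((k : ℂ) + 1 + 1)) • x k := by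
        simp only [mul_zero, zero_mul, sub_zero] at h2
        push_cast at h2
        exact h2
      have h4 : ((k : ℂ) + 1) ≠ 0 := Nat.cast_add_one_ne_zero k
      have h5 : ((k : ℂ) + 1 + 1) ≠ 0 := by
        have : (((k + 2 : ℕ)) : ℂ) ≠ 0 := Nat.cast_ne_zero.mpr (by omega)
        push_cast at this
        intro hcc; apply this; linear_combination hcc
      have hc : (-((k : ℂ) + 1) * ((k : ℂ) + 1 + 1)) ≠ 0 :=
        mul_ne_zero (neg_ne_zero.mpr h4) h5
      exact (smul_eq_zero.mp h3.symm).resolve_left hc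
  have hfin := hzero k hk
  rw [hx0, sub_eq_zero] at hfin
  exact hfin
end

section
/- Let V be a finite-dimensional representation of sl_2(ℂ), and for k ∈ ℤ let V[k] be the k-eigenspace of h. Then for each k ≥ 0 the map f^k : V[k] → V[-k] is a linear isomorphism. -/
open Module

section Aux

variable {V : Type*} [AddCommGroup V] [Module ℂ V] [FiniteDimensional ℂ V]

/-- Pointwise: `H (F v) = F (H v) - 2 F v`. -/
private lemma hHF_pt (F H : Module.End ℂ V) (hHF : H * F - F * H = (-2 : ℂ) • F) (v : V) :
    H (F v) = F (H v) + (-2 : ℂ) • F v := by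
  have := LinearMap.ext_iff.mp hHF v
  simp only [LinearMap.sub_apply, Module.End.mul_apply, LinearMap.smul_apply] at this
  linear_combination (norm := module) this

/-- `F` lowers `H`-weights by 2 (iterated). -/
private lemma weight_F_pow (F H : Module.End ℂ V) (hHF : H * F - F * H = (-2 : ℂ) • F)
    {μ : ℂ} {v : V} (hv : H v = μ • v) (m : ℕ) :
    H ((F ^ m) v) = (μ - 2 * m) • (F ^ m) v := by
  induction m with
  | zero => simpa using hv
  | succ m ih =>
    have h1 : (F ^ (m + 1)) v = F ((F ^ m) v) := by
      rw [pow_succ', Module.End.mul_apply]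
    rw [h1, hHF_pt F H hHF, ih, map_smul]
    push_cast
    match_scalars <;> ring

/-- Key commutation identity, pointwise on an `H`-eigenvector. -/
private lemma key_comm (E F H : Module.End ℂ V)
    (hEF : E * F - F * E = H) (hHF : H * F - F * H = (-2 : ℂ) • F)
    {μ : ℂ} (m : ℕ) :
    ∀ v : V, H v = μ • v →
      E ((F ^ (m + 1)) v) = (F ^ (m + 1)) (E v) + (((m : ℂ) + 1) * (μ - m)) • (F ^ m) v := by
  induction m generalizing μ with
  | zero =>
    intro v hv
    have := LinearMap.ext_iff.mp hEF v
    simp only [LinearMap.sub_apply, Module.End.mul_apply] at this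
    simp only [zero_add, pow_one, pow_zero, Module.End.one_apply, Nat.cast_zero]
    rw [show E (F v) = F (E v) + H v by linear_combination (norm := module) this, hv]
    match_scalars <;> ring
  | succ m ih =>
    intro v hv
    have hFv : H (F v) = (μ - 2) • F v := by
      rw [hHF_pt F H hHF, hv, map_smul]; match_scalars <;> ring
    have h1 : ∀ (j : ℕ) (w : V), (F ^ (j + 1)) w = (F ^ j) (F w) := by
      intro j w; rw [pow_succ, Module.End.mul_apply]
    have := LinearMap.ext_iff.mp hEF v
    simp only [LinearMap.sub_apply, Module.End.mul_apply] at this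
    have hEFv : E (F v) = F (E v) + μ • v := by
      rw [show E (F v) = F (E v) + H v by linear_combination (norm := module) this, hv]
    rw [h1 (m + 1) v, ih (F v) hFv, hEFv, map_add, map_smul, ← h1 (m + 1) (E v), h1 m v]
    push_cast
    match_scalars <;> ring

/-- Local nilpotency of a weight-shifting operator on an eigenvector. -/
private lemma exists_pow_eq_zero (H A : Module.End ℂ V) (c : ℂ) (hc : c ≠ 0)
    (hcomm : ∀ (μ : ℂ) (w : V), H w = μ • w → H (A w) = (μ + c) • A w)
    {μ : ℂ} {v : V} (hv : H v = μ • v) :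
    ∃ n : ℕ, (A ^ n) v = 0 := by
  by_contra hcon
  push_neg at hcon
  have heig : ∀ n : ℕ, H ((A ^ n) v) = (μ + n * c) • (A ^ n) v := by
    intro n
    induction n with
    | zero => simpa using hv
    | succ n ih =>
      have h1 : (A ^ (n + 1)) v = A ((A ^ n) v) := by rw [pow_succ', Module.End.mul_apply]
      rw [h1, hcomm _ _ ih]
      push_cast
      match_scalars <;> ring
  have hinj : Function.Injective (fun n : ℕ => μ + n * c) := by
    intro a b hab
    simp only at hab
    have : (a : ℂ) = b := by
      exact mul_right_cancel₀ hc (add_left_cancel hab)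
    exact_mod_cast this
  have hli := H.eigenvectors_linearIndependent' (fun n : ℕ => μ + n * c) hinj
    (fun n => (A ^ n) v)
    (fun n => ⟨by rw [Module.End.mem_eigenspace_iff]; exact heig n, hcon n⟩)
  haveI : Finite ℕ := hli.finite
  exact not_finite ℕ

/-- A primitive vector of weight `n` satisfies `F^i v ≠ 0` for `i ≤ n`. -/
private lemma prim_pow_ne_zero (E F H : Module.End ℂ V)
    (hEF : E * F - F * E = H) (hHF : H * F - F * H = (-2 : ℂ) • F)
    {n : ℕ} {v : V} (hv : H v = (n : ℂ) • v) (hv0 : v ≠ 0) (hE : E v = 0) :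
    ∀ i, i ≤ n → (F ^ i) v ≠ 0 := by
  intro i
  induction i with
  | zero => intro _; simpa using hv0
  | succ i ih =>
    intro hin hcon
    have hi : i ≤ n := Nat.le_of_succ_le hin
    have := key_comm E F H hEF hHF i v hv
    rw [hcon, hE, map_zero, map_zero, zero_add, eq_comm, smul_eq_zero] at this
    rcases this with h | h
    · have h1 : ((i : ℂ) + 1) ≠ 0 := Nat.cast_add_one_ne_zero i
      have h2 : ((n : ℂ) - i) ≠ 0 :=
        sub_ne_zero.mpr (by exact_mod_cast (Nat.lt_of_succ_le hin).ne')
      exact (mul_ne_zero h1 h2) h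
    · exact ih hi h

/-- Injectivity of `F^k` on the `k`-eigenspace, assuming `E`-nilpotency. -/
private lemma inj_aux (E F H : Module.End ℂ V)
    (hEF : E * F - F * E = H) (hHE : H * E - E * H = (2 : ℂ) • E)
    (hHF : H * F - F * H = (-2 : ℂ) • F) :
    ∀ (N : ℕ) (k : ℕ) (v : V), H v = (k : ℂ) • v → (F ^ k) v = 0 → (E ^ N) v = 0 → v = 0 := by
  intro N
  induction N with
  | zero => intro k v _ _ h; simpa using h
  | succ N ih =>
    intro k v hv hF hE
    have hHE_pt : ∀ w : V, H (E w) = E (H w) + (2 : ℂ) • E w := by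
      intro w
      have := LinearMap.ext_iff.mp hHE w
      simp only [LinearMap.sub_apply, Module.End.mul_apply, LinearMap.smul_apply] at this
      linear_combination (norm := module) this
    have hw : H (E v) = ((k + 2 : ℕ) : ℂ) • E v := by
      rw [hHE_pt, hv, map_smul]
      push_cast
      match_scalars <;> ring
    have hFk1 : (F ^ (k + 1)) v = 0 := by
      rw [pow_succ', Module.End.mul_apply, hF, map_zero]
    have hFk2 : (F ^ (k + 2)) v = 0 := by
      rw [show k + 2 = k + 1 + 1 from rfl, pow_succ', Module.End.mul_apply, hFk1, map_zero]
    have hFw : (F ^ (k + 2)) (E v) = 0 := by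
      have hkc := key_comm E F H hEF hHF (k + 1) v hv
      rw [show k + 1 + 1 = k + 2 from rfl, hFk2, map_zero, hFk1, smul_zero, add_zero] at hkc
      exact hkc.symm
    have hEw : (E ^ N) (E v) = 0 := by
      rw [← Module.End.mul_apply, ← pow_succ]
      exact hE
    have hw0 : E v = 0 := ih (k + 2) (E v) hw hFw hEw
    by_contra hv0
    exact prim_pow_ne_zero E F H hEF hHF hv hv0 hw0 k le_rfl hF

/-- Injectivity of `F^k` on the `k`-eigenspace. -/
private lemma inj_main (E F H : Module.End ℂ V)
    (hEF : E * F - F * E = H) (hHE : H * E - E * H = (2 : ℂ) • E)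
    (hHF : H * F - F * H = (-2 : ℂ) • F)
    (k : ℕ) (v : V) (hv : H v = (k : ℂ) • v) (hF : (F ^ k) v = 0) : v = 0 := by
  have hHE_pt : ∀ (μ : ℂ) (w : V), H w = μ • w → H (E w) = (μ + 2) • E w := by
    intro μ w hww
    have := LinearMap.ext_iff.mp hHE w
    simp only [LinearMap.sub_apply, Module.End.mul_apply, LinearMap.smul_apply] at this
    rw [show H (E w) = E (H w) + (2:ℂ) • E w by linear_combination (norm := module) this, hww, map_smul]
    match_scalars <;> ring
  obtain ⟨N, hN⟩ := exists_pow_eq_zero H E 2 two_ne_zero hHE_pt hv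
  exact inj_aux E F H hEF hHE hHF N k v hv hF hN

end Aux

/-- In a finite-dimensional `𝔰𝔩₂(ℂ)`-representation, `f^k : V[k] → V[-k]` is a linear
isomorphism for every `k ≥ 0`. -/
theorem f_pow_k_bijective
    (V : Type*) [AddCommGroup V] [Module ℂ V] [FiniteDimensional ℂ V]
    (E F H : Module.End ℂ V)
    (hEF : E * F - F * E = H)
    (hHE : H * E - E * H = (2 : ℂ) • E)
    (hHF : H * F - F * H = (-2 : ℂ) • F)
    (k : ℕ) :
    ∃ hmap : ∀ v ∈ Module.End.eigenspace H (k : ℂ),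
        (F ^ k) v ∈ Module.End.eigenspace H (-(k : ℂ)),
      Function.Bijective ((F ^ k).restrict hmap) := by
  -- the swapped triple
  have hEF' : F * E - E * F = -H := by
    rw [← hEF]; abel
  have hHE' : (-H) * F - F * (-H) = (2 : ℂ) • F := by
    rw [neg_mul, mul_neg, show -(H * F) - -(F * H) = -(H * F - F * H) by abel, hHF]
    match_scalars; ring
  have hHF' : (-H) * E - E * (-H) = (-2 : ℂ) • E := by
    rw [neg_mul, mul_neg, show -(H * E) - -(E * H) = -(H * E - E * H) by abel, hHE]
    match_scalars; ring
  have hmap : ∀ v ∈ Module.End.eigenspace H (k : ℂ),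
      (F ^ k) v ∈ Module.End.eigenspace H (-(k : ℂ)) := by
    intro v hv
    rw [Module.End.mem_eigenspace_iff] at hv ⊢
    rw [weight_F_pow F H hHF hv k]
    match_scalars <;> ring
  have hmap' : ∀ v ∈ Module.End.eigenspace H (-(k : ℂ)),
      (E ^ k) v ∈ Module.End.eigenspace H (k : ℂ) := by
    intro v hv
    rw [Module.End.mem_eigenspace_iff] at hv ⊢
    have hv' : (-H) v = (k : ℂ) • v := by
      simp only [LinearMap.neg_apply, hv]; match_scalars <;> ring
    have := weight_F_pow E (-H) hHF' hv' k
    simp only [LinearMap.neg_apply] at this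
    rw [show H ((E ^ k) v) = -(((k:ℂ) - 2 * k) • (E ^ k) v) by
      rw [← this]; abel]
    match_scalars <;> ring
  refine ⟨hmap, ?_⟩
  have hinj : Function.Injective ((F ^ k).restrict hmap) := by
    intro x y hxy
    have hsub : (F ^ k) ((x : V) - y) = 0 := by
      rw [map_sub, sub_eq_zero]
      exact congrArg Subtype.val hxy
    have hmem : H ((x : V) - y) = (k : ℂ) • ((x : V) - y) := by
      have hx := Module.End.mem_eigenspace_iff.mp x.2
      have hy := Module.End.mem_eigenspace_iff.mp y.2
      rw [map_sub, hx, hy, smul_sub]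
    have := inj_main E F H hEF hHE hHF k _ hmem hsub
    exact Subtype.ext (sub_eq_zero.mp this)
  have hinj' : Function.Injective ((E ^ k).restrict hmap') := by
    intro x y hxy
    have hsub : (E ^ k) ((x : V) - y) = 0 := by
      rw [map_sub, sub_eq_zero]
      exact congrArg Subtype.val hxy
    have hmem : (-H) ((x : V) - y) = (k : ℂ) • ((x : V) - y) := by
      have hx := Module.End.mem_eigenspace_iff.mp x.2
      have hy := Module.End.mem_eigenspace_iff.mp y.2
      simp only [LinearMap.neg_apply, map_sub, hx, hy]
      match_scalars <;> ring
    have := inj_main F E (-H) hEF' hHE' hHF' k _ hmem hsub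
    exact Subtype.ext (sub_eq_zero.mp this)
  have h1 : Module.finrank ℂ (Module.End.eigenspace H (k : ℂ))
      ≤ Module.finrank ℂ (Module.End.eigenspace H (-(k : ℂ))) :=
    LinearMap.finrank_le_finrank_of_injective hinj
  have h2 : Module.finrank ℂ (Module.End.eigenspace H (-(k : ℂ)))
      ≤ Module.finrank ℂ (Module.End.eigenspace H (k : ℂ)) :=
    LinearMap.finrank_le_finrank_of_injective hinj'
  exact ⟨hinj, (LinearMap.injective_iff_surjective_of_finrank_eq_finrank
    (le_antisymm h1 h2)).mp hinj⟩
end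

section
/- Let P = P_0 ⊔ P_1 ⊔ ... ⊔ P_r be a finite ranked poset, and suppose there exists a linear operator φ on the complex vector space with basis P sending each element x ∈ P_i (for i ≥ 1) to a linear combination of elements covered by x (which lie in P_{i-1}), such that φ^{r-2i} : ℂP_{r-i} → ℂP_i is an isomorphism for each i with 2i ≤ r. Then P is strongly Sperner: for every k, no union of k antichains of P has more elements than the union of the k largest rank levels P_i. -/
open Module

variable {P : Type*}

/-- The subspace of `ℂP` spanned by elements of rank `i` (functions supported on rank `i`). -/
noncomputable def rankLevel [Fintype P] (rk : P → ℕ) (i : ℕ) : Submodule ℂ (P → ℂ) where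
  carrier := {f | ∀ x : P, rk x ≠ i → f x = 0}
  add_mem' := by
    intro a b ha hb x hx
    simp [ha x hx, hb x hx]
  zero_mem' := by
    intro x hx
    rfl
  smul_mem' := by
    intro c a ha x hx
    simp [ha x hx]

set_option linter.unusedSectionVars false
set_option linter.unusedVariables false

lemma expand_singleC {ι : Type*} [Fintype ι] [DecidableEq ι] (f : ι → ℂ) :
    f = ∑ x, f x • (Pi.single x 1 : ι → ℂ) := by
  funext y
  rw [Finset.sum_apply]
  simp [Pi.single_apply]

lemma mat_matching {X Y : Type*} [Fintype X] [DecidableEq X] [Fintype Y] [DecidableEq Y]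
    (M : Matrix Y X ℂ) (h : Function.Injective M.mulVec) :
    ∃ g : X → Y, Function.Injective g ∧ ∀ x, M (g x) x ≠ 0 := by
  classical
  have hspan : Submodule.span ℂ (Set.range fun y => M y) = ⊤ := by
    by_contra hne
    obtain ⟨f, hf0, hfmap⟩ := Submodule.exists_dual_map_eq_bot_of_lt_top
      (lt_top_iff_ne_top.2 hne) inferInstance
    set v : X → ℂ := fun x => f (Pi.single x 1) with hv
    have hfeq : ∀ u : X → ℂ, f u = ∑ x, u x * v x := by
      intro u
      conv_lhs => rw [expand_singleC u]
      rw [map_sum]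
      simp [hv, smul_eq_mul]
    have hvz : M.mulVec v = 0 := by
      funext y
      have hmem : f (M y) ∈ Submodule.map f (Submodule.span ℂ (Set.range fun y => M y)) :=
        Submodule.mem_map_of_mem (Submodule.subset_span ⟨y, rfl⟩)
      rw [hfmap] at hmem
      have : f (M y) = 0 := by simpa using hmem
      rw [hfeq] at this
      simpa [Matrix.mulVec, dotProduct] using this
    have hv0 : v = 0 := h (by rw [hvz, Matrix.mulVec_zero])
    apply hf0
    refine LinearMap.ext fun u => ?_
    rw [hfeq]
    simp [hv0]
  obtain ⟨t, hts, htspan, htli⟩ := exists_linearIndependent ℂ (Set.range fun y => M y)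
  rw [hspan] at htspan
  obtain ⟨b, hbdef⟩ : ∃ b : Basis t ℂ (X → ℂ), ∀ u, b u = u.val :=
    ⟨Basis.mk htli (by rw [Subtype.range_coe]; exact htspan.ge),
     fun u => Basis.mk_apply _ _ u⟩
  have e : t ≃ X := b.indexEquiv (Pi.basisFun ℂ X)
  set b' : Basis X ℂ (X → ℂ) := b.reindex e with hb'
  have hdet : ((Pi.basisFun ℂ X).toMatrix ⇑b').det ≠ 0 := by
    have := (Pi.basisFun ℂ X).isUnit_det b'
    rw [Basis.det_apply] at this
    exact this.ne_zero
  rw [Matrix.det_apply'] at hdet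
  obtain ⟨σ, -, hσ⟩ := Finset.exists_ne_zero_of_sum_ne_zero hdet
  have hterm : ∀ i : X, b' i (σ i) ≠ 0 := by
    intro i hzero
    apply hσ
    have hz2 : (Pi.basisFun ℂ X).toMatrix (⇑b') (σ i) i = 0 := by
      rw [Basis.toMatrix_apply, Pi.basisFun_repr]; exact hzero
    exact mul_eq_zero_of_right _ (Finset.prod_eq_zero (Finset.mem_univ i) hz2)
  have hrow : ∀ u : t, ∃ y : Y, M y = u.val := fun u => hts u.2
  choose ρ hρ using hrow
  have hρinj : Function.Injective ρ := by
    intro u u' huu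
    apply Subtype.ext
    rw [← hρ u, ← hρ u', huu]
  have hbv : ∀ i : X, b' i = M (ρ (e.symm i)) := by
    intro i
    rw [hρ, hb', Basis.reindex_apply, hbdef]
  refine ⟨fun x => ρ (e.symm (σ.symm x)), ?_, ?_⟩
  · intro a b hab
    exact σ.symm.injective (e.symm.injective (hρinj hab))
  · intro x
    have := hterm (σ.symm x)
    rw [hbv (σ.symm x)] at this
    simpa using this

section Poset

variable [Fintype P] [DecidableEq P] [PartialOrder P]
variable (rk : P → ℕ) (φ : (P → ℂ) →ₗ[ℂ] (P → ℂ))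

lemma phi_supp (hrk : ∀ x y : P, x ⋖ y → rk y = rk x + 1)
    (hφ : ∀ x y : P, φ (Pi.single x 1) y ≠ 0 → y ⋖ x)
    (g : P → ℂ) {j t : ℕ} (hg : ∀ x, g x ≠ 0 → rk x + t = j) :
    ∀ y, φ g y ≠ 0 → rk y + 1 + t = j := by
  intro y hy
  rw [expand_singleC g, map_sum, Finset.sum_apply] at hy
  obtain ⟨x, -, hx⟩ := Finset.exists_ne_zero_of_sum_ne_zero hy
  rw [_root_.map_smul, Pi.smul_apply, smul_eq_mul] at hx
  have h1 : g x ≠ 0 := fun h => hx (by rw [h, zero_mul])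
  have h2 : φ (Pi.single x 1) y ≠ 0 := fun h => hx (by rw [h, mul_zero])
  have hcov := hφ x y h2
  have := hrk y x hcov
  have := hg x h1
  omega

lemma pow_supp (hrk : ∀ x y : P, x ⋖ y → rk y = rk x + 1)
    (hφ : ∀ x y : P, φ (Pi.single x 1) y ≠ 0 → y ⋖ x) :
    ∀ (n : ℕ) (g : P → ℂ) (j t : ℕ), (∀ x, g x ≠ 0 → rk x + t = j) →
      ∀ y, (φ^n) g y ≠ 0 → rk y + n + t = j := by
  intro n
  induction n with
  | zero =>
    intro g j t hg y hy
    rw [pow_zero, Module.End.one_apply] at hy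
    have := hg y hy
    omega
  | succ n ih =>
    intro g j t hg y hy
    rw [pow_succ, Module.End.mul_apply] at hy
    have hg' : ∀ x, φ g x ≠ 0 → rk x + (1 + t) = j := by
      intro x hx
      have := phi_supp rk φ hrk hφ g hg x hx
      omega
    have := ih (φ g) j (1 + t) hg' y hy
    omega

variable (r : ℕ)

lemma inj_P (hbound : ∀ x : P, rk x ≤ r)
    (hiso : ∀ i : ℕ, 2 * i ≤ r →
      ∃ hmap : ∀ f ∈ rankLevel rk (r - i), (φ ^ (r - 2 * i)) f ∈ rankLevel rk i,
        Function.Bijective ((φ ^ (r - 2 * i)).restrict hmap))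
    (k : ℕ) (j : ℕ) (f : P → ℂ) (hj : r + k ≤ 2*j)
    (hf : ∀ x, f x ≠ 0 → rk x = j) (hfk : (φ^k) f = 0) : f = 0 := by
  by_cases hjr : j ≤ r
  · obtain ⟨hmap, hbij⟩ := hiso (r - j) (by omega)
    have hff : f ∈ rankLevel rk (r - (r - j)) := by
      intro x hx
      by_contra hfx
      exact hx (by rw [hf x hfx]; omega)
    have h0 : (φ ^ (r - 2 * (r - j))) f = 0 := by
      have he : (φ ^ (r - 2 * (r - j))) f = (φ ^ ((r - 2 * (r - j)) - k)) ((φ^k) f) := by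
        rw [← Module.End.mul_apply, ← pow_add]
        congr 2
        omega
      rw [he, hfk, map_zero]
    have hz : (φ ^ (r - 2 * (r - j))).restrict hmap ⟨f, hff⟩ = 0 := by
      apply Subtype.ext
      rw [LinearMap.restrict_apply]
      simpa using h0
    have := hbij.1 (a₂ := 0) (by rw [hz, map_zero])
    exact Subtype.ext_iff.1 this
  · funext x
    by_contra hx
    have := hf x hx
    have := hbound x
    omega

lemma surj_P (hbound : ∀ x : P, rk x ≤ r)
    (hiso : ∀ i : ℕ, 2 * i ≤ r →
      ∃ hmap : ∀ f ∈ rankLevel rk (r - i), (φ ^ (r - 2 * i)) f ∈ rankLevel rk i,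
        Function.Bijective ((φ ^ (r - 2 * i)).restrict hmap))
    (hrk : ∀ x y : P, x ⋖ y → rk y = rk x + 1)
    (hφ : ∀ x y : P, φ (Pi.single x 1) y ≠ 0 → y ⋖ x)
    (k : ℕ) (j : ℕ) (g : P → ℂ) (hj : 2*j + k ≤ r)
    (hg : ∀ x, g x ≠ 0 → rk x = j) :
    ∃ f, (∀ x, f x ≠ 0 → rk x = j + k) ∧ (φ^k) f = g := by
  obtain ⟨hmap, hbij⟩ := hiso j (by omega)
  have hgm : g ∈ rankLevel rk j := by
    intro x hx
    by_contra hgx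
    exact hx (hg x hgx)
  obtain ⟨⟨h0, hmem⟩, hh⟩ := hbij.2 ⟨g, hgm⟩
  have hh0 : (φ ^ (r - 2 * j)) h0 = g := by
    have := Subtype.ext_iff.1 hh
    rwa [LinearMap.restrict_apply] at this
  refine ⟨(φ ^ (r - 2*j - k)) h0, ?_, ?_⟩
  · intro x hx
    have hsupp : ∀ z, h0 z ≠ 0 → rk z + 0 = r - j := by
      intro z hz
      by_contra hc
      exact hz (hmem z (by omega))
    have := pow_supp rk φ hrk hφ (r - 2*j - k) h0 (r - j) 0 hsupp x hx
    omega
  · rw [← Module.End.mul_apply, ← pow_add]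
    have hkk : k + (r - 2*j - k) = r - 2 * j := by omega
    rw [hkk, hh0]

end Poset
lemma addnz {a b : ℂ} (h : a + b ≠ 0) : a ≠ 0 ∨ b ≠ 0 := by
  by_contra hc
  push_neg at hc
  exact h (by rw [hc.1, hc.2, add_zero])

section QLayer

variable [Fintype P] [DecidableEq P] [PartialOrder P]
variable (rk : P → ℕ) (φ : (P → ℂ) →ₗ[ℂ] (P → ℂ)) (k : ℕ)

/-- rank function on `P × Fin k`. -/
def rkQ (q : P × Fin k) : ℕ := rk q.1 + q.2.val

/-- tensor-product lowering operator on `P × Fin k`. -/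
noncomputable def PhiQ : (P × Fin k → ℂ) →ₗ[ℂ] (P × Fin k → ℂ) where
  toFun F := fun q => φ (fun z => F (z, q.2)) q.1 +
    (if h : q.2.val + 1 < k then F (q.1, ⟨q.2.val + 1, h⟩) else 0)
  map_add' F G := by
    funext q
    have : (fun z => (F + G) (z, q.2)) = (fun z => F (z, q.2)) + (fun z => G (z, q.2)) := rfl
    rw [this, map_add]
    by_cases h : q.2.val + 1 < k <;> simp [h] <;> ring
  map_smul' c F := by
    funext q
    have : (fun z => (c • F) (z, q.2)) = c • (fun z => F (z, q.2)) := rfl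
    rw [this, _root_.map_smul]
    by_cases h : q.2.val + 1 < k <;> simp [h] <;> ring

lemma phiQ_apply (F : P × Fin k → ℂ) (q : P × Fin k) :
    PhiQ φ k F q = φ (fun z => F (z, q.2)) q.1 +
      (if h : q.2.val + 1 < k then F (q.1, ⟨q.2.val + 1, h⟩) else 0) := rfl

lemma phiQ_supp (hrk : ∀ x y : P, x ⋖ y → rk y = rk x + 1)
    (hφ : ∀ x y : P, φ (Pi.single x 1) y ≠ 0 → y ⋖ x)
    (F : P × Fin k → ℂ) (m : ℕ) (hF : ∀ q, F q ≠ 0 → rkQ rk k q = m) :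
    ∀ q, PhiQ φ k F q ≠ 0 → rkQ rk k q + 1 = m := by
  rintro ⟨y, b⟩ hq
  rw [phiQ_apply] at hq
  rcases addnz hq with h1 | h2
  · have hsl : ∀ z, (fun z => F (z, b)) z ≠ 0 → rk z + b.val = m := by
      intro z hz
      exact hF (z, b) hz
    have := phi_supp rk φ hrk hφ _ hsl y h1
    simpa [rkQ] using by omega
  · rcases Decidable.em (b.val + 1 < k) with h | h
    · rw [dif_pos h] at h2
      have := hF (y, ⟨b.val + 1, h⟩) h2
      simp only [rkQ] at this ⊢
      omega
    · rw [dif_neg h] at h2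
      exact absurd rfl h2

lemma phiQ_strict
    (hφ : ∀ x y : P, φ (Pi.single x 1) y ≠ 0 → y ⋖ x)
    (q0 q : P × Fin k) (h : PhiQ φ k (Pi.single q0 1) q ≠ 0) : q < q0 := by
  obtain ⟨y, b⟩ := q
  rw [phiQ_apply] at h
  rcases addnz h with h1 | h2
  · have hb : b = q0.2 := by
      by_contra hb
      apply h1
      have : (fun z => (Pi.single q0 1 : P × Fin k → ℂ) (z, b)) = (0 : P → ℂ) := by
        funext z
        rw [Pi.single_apply, if_neg (fun he => hb (congrArg Prod.snd he))]
        rfl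
      rw [this, map_zero]
      rfl
    have hinner : (fun z => (Pi.single q0 1 : P × Fin k → ℂ) (z, b)) = Pi.single q0.1 1 := by
      funext z
      rw [Pi.single_apply, Pi.single_apply]
      congr 1
      simp [Prod.ext_iff, hb]
    rw [hinner] at h1
    have hcov := hφ q0.1 y h1
    have : (y, b) < (q0.1, q0.2) := Prod.mk_lt_mk.2 (Or.inl ⟨hcov.lt, le_of_eq hb⟩)
    simpa using this
  · rcases Decidable.em (b.val + 1 < k) with hlt | hlt
    · rw [dif_pos hlt] at h2
      rw [Pi.single_apply] at h2
      have he : (y, (⟨b.val + 1, hlt⟩ : Fin k)) = q0 := by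
        by_contra hne
        rw [if_neg hne] at h2
        exact h2 rfl
      have : (y, b) < (y, (⟨b.val + 1, hlt⟩ : Fin k)) := by
        apply Prod.mk_lt_mk.2
        right
        exact ⟨le_rfl, by simp [Fin.lt_def]⟩
      rw [he] at this
      exact this
    · rw [dif_neg hlt] at h2
      exact absurd rfl h2

end QLayer
section QLayer2

variable [Fintype P] [DecidableEq P] [PartialOrder P]
variable (rk : P → ℕ) (φ : (P → ℂ) →ₗ[ℂ] (P → ℂ)) (k r : ℕ)

private def ccAux (φ : (P → ℂ) →ₗ[ℂ] (P → ℂ)) (g : ℕ → P → ℂ) : ℕ → P → ℂ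
  | 0 => 0
  | (a+1) => g a - φ (ccAux φ g a)

lemma qker
    (hrk : ∀ x y : P, x ⋖ y → rk y = rk x + 1)
    (hφ : ∀ x y : P, φ (Pi.single x 1) y ≠ 0 → y ⋖ x)
    (hbound : ∀ x : P, rk x ≤ r)
    (hiso : ∀ i : ℕ, 2 * i ≤ r →
      ∃ hmap : ∀ f ∈ rankLevel rk (r - i), (φ ^ (r - 2 * i)) f ∈ rankLevel rk i,
        Function.Bijective ((φ ^ (r - 2 * i)).restrict hmap))
    (hk : 1 ≤ k) (m : ℕ) (hm : r + k ≤ 2*m)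
    (F : P × Fin k → ℂ) (hF : ∀ q, F q ≠ 0 → rkQ rk k q = m)
    (h0 : PhiQ φ k F = 0) : F = 0 := by
  classical
  set f : ℕ → P → ℂ := fun a z => if h : a < k then F (z, ⟨a, h⟩) else 0 with hfdef
  have heq : ∀ a, a < k → ∀ y, φ (f a) y + f (a+1) y = 0 := by
    intro a ha y
    have hc := congrFun h0 (y, (⟨a, ha⟩ : Fin k))
    rw [phiQ_apply] at hc
    have hsl : (fun z => F (z, (⟨a, ha⟩ : Fin k))) = f a := by
      funext z
      simp [hfdef, ha]
    have hdit : (if h : a + 1 < k then F (y, ⟨a+1, h⟩) else 0) = f (a+1) y := by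
      by_cases h : a + 1 < k <;> simp [hfdef, h]
    rw [hsl] at hc
    simp only [Pi.zero_apply] at hc
    rw [← hdit]
    exact hc
  have hform : ∀ a, a ≤ k → f a = ((-1:ℂ)^a) • ((φ^a) (f 0)) := by
    intro a
    induction a with
    | zero => intro _; simp
    | succ a ih =>
      intro ha1
      have ha : a < k := by omega
      have hfa1 : f (a+1) = -(φ (f a)) := by
        funext y
        have := heq a ha y
        rw [Pi.neg_apply]
        linear_combination this
      rw [hfa1, ih (by omega), _root_.map_smul]
      have hps : (φ^(a+1)) (f 0) = φ ((φ^a) (f 0)) := by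
        rw [pow_succ', Module.End.mul_apply]
      rw [hps, pow_succ]
      module
  have hfk0 : f k = 0 := by
    funext z
    simp [hfdef]
  have hpk : (φ^k) (f 0) = 0 := by
    have h1 := hform k le_rfl
    rw [hfk0] at h1
    have := h1.symm
    rcases smul_eq_zero.1 this with h | h
    · exact absurd h (pow_ne_zero _ (by norm_num))
    · exact h
  have hsupp0 : ∀ z, f 0 z ≠ 0 → rk z = m := by
    intro z hz
    have hfz : f 0 z = F (z, ⟨0, hk⟩) := by
      simp only [hfdef]
      exact dif_pos hk
    rw [hfz] at hz
    have := hF (z, ⟨0, hk⟩) hz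
    simpa [rkQ] using this
  have hf0 : f 0 = 0 := inj_P rk φ r hbound hiso k m (f 0) hm hsupp0 hpk
  funext q
  obtain ⟨z, b⟩ := q
  have : F (z, b) = f b.val z := by
    simp [hfdef, b.isLt]
  rw [this, hform b.val (le_of_lt b.isLt), hf0]
  simp

lemma qsurj
    (hrk : ∀ x y : P, x ⋖ y → rk y = rk x + 1)
    (hφ : ∀ x y : P, φ (Pi.single x 1) y ≠ 0 → y ⋖ x)
    (hbound : ∀ x : P, rk x ≤ r)
    (hiso : ∀ i : ℕ, 2 * i ≤ r →
      ∃ hmap : ∀ f ∈ rankLevel rk (r - i), (φ ^ (r - 2 * i)) f ∈ rankLevel rk i,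
        Function.Bijective ((φ ^ (r - 2 * i)).restrict hmap))
    (hk : 1 ≤ k) (m : ℕ) (hm : 2*m + 2 ≤ r + k)
    (G : P × Fin k → ℂ) (hG : ∀ q, G q ≠ 0 → rkQ rk k q = m) :
    ∃ F, (∀ q, F q ≠ 0 → rkQ rk k q = m + 1) ∧ PhiQ φ k F = G := by
  classical
  set g : ℕ → P → ℂ := fun a z => if h : a < k then G (z, ⟨a, h⟩) else 0 with hgdef
  have hgsupp : ∀ a z, g a z ≠ 0 → rk z + a = m := by
    intro a z hz
    rw [hgdef] at hz
    by_cases h : a < k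
    · simp only [dif_pos h] at hz
      have := hG (z, ⟨a, h⟩) hz
      simpa [rkQ] using this
    · simp [dif_neg h] at hz
  have hcs : ∀ a z, ccAux φ g a z ≠ 0 → rk z + a = m + 1 := by
    intro a
    induction a with
    | zero => intro z hz; simp [ccAux] at hz
    | succ a ih =>
      intro z hz
      simp only [ccAux, Pi.sub_apply] at hz
      have : g a z ≠ 0 ∨ φ (ccAux φ g a) z ≠ 0 := by
        by_contra hc
        push_neg at hc
        exact hz (by rw [hc.1, hc.2, sub_zero])
      rcases this with h | h
      · have := hgsupp a z h
        omega
      · have := phi_supp rk φ hrk hφ (ccAux φ g a) (j := m+1) (t := a) ih z h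
        omega
  set tg : P → ℂ := ((-1:ℂ)^(k-1)) • ccAux φ g k with htg
  have htgsupp : ∀ z, tg z ≠ 0 → rk z + k = m + 1 := by
    intro z hz
    rw [htg, Pi.smul_apply, smul_eq_mul] at hz
    have : ccAux φ g k z ≠ 0 := fun h => hz (by rw [h, mul_zero])
    exact hcs k z this
  obtain ⟨u0, hu0supp, hu0⟩ :
      ∃ u0 : P → ℂ, (∀ z, u0 z ≠ 0 → rk z = m + 1) ∧ (φ^k) u0 = tg := by
    by_cases hkm : k ≤ m + 1
    · obtain ⟨f0, hf0supp, hf0⟩ := surj_P rk φ r hbound hiso hrk hφ k (m+1-k) tg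
        (by omega) (fun z hz => by have := htgsupp z hz; omega)
      exact ⟨f0, fun z hz => by have := hf0supp z hz; omega, hf0⟩
    · have : tg = 0 := by
        funext z
        by_contra hz
        have := htgsupp z hz
        omega
      exact ⟨0, by simp, by rw [map_zero, this]⟩
  set u : ℕ → P → ℂ := fun a => ccAux φ g a + ((-1:ℂ)^a) • ((φ^a) u0) with hu
  have husupp : ∀ a z, u a z ≠ 0 → rk z + a = m + 1 := by
    intro a z hz
    rw [hu] at hz
    simp only [Pi.add_apply, Pi.smul_apply, smul_eq_mul] at hz
    have : ccAux φ g a z ≠ 0 ∨ (φ^a) u0 z ≠ 0 := by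
      by_contra hc
      push_neg at hc
      exact hz (by rw [hc.1, hc.2, mul_zero, add_zero])
    rcases this with h | h
    · exact hcs a z h
    · have := pow_supp rk φ hrk hφ a u0 (m+1) 0 (fun x hx => by rw [hu0supp x hx]) z h
      omega
  have hurec : ∀ a, u (a+1) = g a - φ (u a) := by
    intro a
    rw [hu]
    show ccAux φ g (a+1) + ((-1:ℂ)^(a+1)) • ((φ^(a+1)) u0) = _
    have hcc : ccAux φ g (a+1) = g a - φ (ccAux φ g a) := rfl
    rw [hcc, map_add, _root_.map_smul]
    have hps : (φ^(a+1)) u0 = φ ((φ^a) u0) := by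
      rw [pow_succ', Module.End.mul_apply]
    rw [hps, pow_succ]
    module
  have hufin : φ (u (k-1)) = g (k-1) := by
    rw [hu]
    show φ (ccAux φ g (k-1) + ((-1:ℂ)^(k-1)) • ((φ^(k-1)) u0)) = _
    rw [map_add, _root_.map_smul]
    have hps : φ ((φ^(k-1)) u0) = (φ^k) u0 := by
      have hk1 : k - 1 + 1 = k := by omega
      rw [← Module.End.mul_apply, ← pow_succ', hk1]
    rw [hps, hu0, htg, smul_smul]
    have hone : ((-1:ℂ)^(k-1)) * ((-1:ℂ)^(k-1)) = 1 := by
      rw [← pow_add]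
      exact Even.neg_one_pow ⟨k-1, rfl⟩
    rw [hone, one_smul]
    have hcc : ccAux φ g ((k-1)+1) = g (k-1) - φ (ccAux φ g (k-1)) := rfl
    have hk1 : k - 1 + 1 = k := by omega
    rw [hk1] at hcc
    rw [hcc]
    abel
  refine ⟨fun q => u q.2.val q.1, ?_, ?_⟩
  · rintro ⟨z, b⟩ hz
    have := husupp b.val z hz
    simpa [rkQ] using this
  · funext q
    obtain ⟨y, b⟩ := q
    rw [phiQ_apply]
    have hsl : (fun z => u b.val z) = u b.val := rfl
    by_cases hb : b.val + 1 < k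
    · rw [dif_pos hb]
      show φ (u b.val) y + u (b.val + 1) y = G (y, b)
      rw [hurec b.val, Pi.sub_apply]
      have hgb : g b.val y = G (y, b) := by
        simp only [hgdef]
        exact dif_pos b.isLt
      rw [hgb]
      ring
    · rw [dif_neg hb]
      have hbv : b.val = k - 1 := by
        have := b.isLt
        omega
      have hlt : k - 1 < k := by omega
      show φ (u b.val) y + 0 = G (y, b)
      rw [hbv, add_zero, hufin]
      have hgb : g (k-1) y = G (y, (⟨k-1, hlt⟩ : Fin k)) := by
        simp only [hgdef]
        exact dif_pos hlt
      have hfb : G (y, (⟨k-1, hlt⟩ : Fin k)) = G (y, b) :=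
        congrArg (fun c : Fin k => G (y, c)) (Fin.ext (by simp only [Fin.val_mk]; omega))
      rw [hgb, hfb]

end QLayer2

section QLayer3

variable [Fintype P] [DecidableEq P] [PartialOrder P]
variable (rk : P → ℕ) (φ : (P → ℂ) →ₗ[ℂ] (P → ℂ)) (k r : ℕ)

lemma supp_sum {Q' : Type*} [Fintype Q'] [DecidableEq Q'] (rkq : Q' → ℕ) (m : ℕ)
    (F : Q' → ℂ) (hF : ∀ q, F q ≠ 0 → rkq q = m) :
    F = ∑ x : {q // rkq q = m}, F x.val • (Pi.single x.val 1 : Q' → ℂ) := by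
  classical
  funext q
  rw [Finset.sum_apply]
  by_cases h : rkq q = m
  · rw [Finset.sum_eq_single (⟨q, h⟩ : {q // rkq q = m})]
    · simp
    · intro b _ hb
      rw [Pi.smul_apply, Pi.single_apply,
        if_neg (fun he => hb (Subtype.ext he.symm)), smul_zero]
    · intro hq
      exact absurd (Finset.mem_univ _) hq
  · have hFq : F q = 0 := by
      by_contra hc
      exact h (hF q hc)
    rw [hFq]
    symm
    apply Finset.sum_eq_zero
    intro b _
    rw [Pi.smul_apply, Pi.single_apply,
      if_neg (fun he => h (by rw [he]; exact b.prop)), smul_zero]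

lemma mulVec_phiQ {m m' : ℕ}
    (v : {q : P × Fin k // rkQ rk k q = m'} → ℂ)
    (y : {q : P × Fin k // rkQ rk k q = m}) :
    (Matrix.mulVec (fun (y : {q : P × Fin k // rkQ rk k q = m})
        (x : {q : P × Fin k // rkQ rk k q = m'}) => PhiQ φ k (Pi.single x.val 1) y.val) v) y
      = PhiQ φ k (∑ x : {q : P × Fin k // rkQ rk k q = m'},
          v x • (Pi.single x.val 1 : P × Fin k → ℂ)) y.val := by
  classical
  rw [map_sum, Finset.sum_apply]
  simp only [Matrix.mulVec, dotProduct]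
  apply Finset.sum_congr rfl
  intro x _
  rw [_root_.map_smul, Pi.smul_apply, smul_eq_mul, mul_comm]

lemma hdnQ
    (hrk : ∀ x y : P, x ⋖ y → rk y = rk x + 1)
    (hφ : ∀ x y : P, φ (Pi.single x 1) y ≠ 0 → y ⋖ x)
    (hbound : ∀ x : P, rk x ≤ r)
    (hiso : ∀ i : ℕ, 2 * i ≤ r →
      ∃ hmap : ∀ f ∈ rankLevel rk (r - i), (φ ^ (r - 2 * i)) f ∈ rankLevel rk i,
        Function.Bijective ((φ ^ (r - 2 * i)).restrict hmap))
    (hk : 1 ≤ k) (m : ℕ) (hm : r + k ≤ 2*(m+1)) :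
    ∃ g : {q : P × Fin k // rkQ rk k q = m + 1} → {q : P × Fin k // rkQ rk k q = m},
      Function.Injective g ∧ ∀ x, (g x).val < x.val := by
  classical
  set M : Matrix {q : P × Fin k // rkQ rk k q = m} {q : P × Fin k // rkQ rk k q = m+1} ℂ :=
    fun y x => PhiQ φ k (Pi.single x.val 1) y.val with hM
  have hker : ∀ v, M.mulVec v = 0 → v = 0 := by
    intro v hv
    set F : P × Fin k → ℂ :=
      ∑ x : {q : P × Fin k // rkQ rk k q = m+1}, v x • (Pi.single x.val 1 : P × Fin k → ℂ)
      with hFdef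
    have hFsupp : ∀ q, F q ≠ 0 → rkQ rk k q = m + 1 := by
      intro q hq
      by_contra h
      apply hq
      rw [hFdef, Finset.sum_apply]
      apply Finset.sum_eq_zero
      intro b _
      rw [Pi.smul_apply, Pi.single_apply, if_neg (fun he => h (by rw [he]; exact b.prop)), smul_zero]
    have hvF : ∀ x : {q : P × Fin k // rkQ rk k q = m+1}, F x.val = v x := by
      intro x
      rw [hFdef, Finset.sum_apply, Finset.sum_eq_single x]
      · simp
      · intro b _ hb
        rw [Pi.smul_apply, Pi.single_apply,
          if_neg (fun he => hb (Subtype.ext he.symm)), smul_zero]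
      · intro hq
        exact absurd (Finset.mem_univ _) hq
    have hPhiF : PhiQ φ k F = 0 := by
      funext q'
      by_cases hq' : rkQ rk k q' = m
      · have := mulVec_phiQ rk φ k (m := m) (m' := m+1) v ⟨q', hq'⟩
        rw [← hM] at this
        rw [← hFdef] at this
        rw [← this, hv]
        rfl
      · by_contra hne
        have := phiQ_supp rk φ k hrk hφ F (m+1) hFsupp q' hne
        omega
    have hF0 : F = 0 := qker rk φ k r hrk hφ hbound hiso hk (m+1) hm F hFsupp hPhiF
    funext x
    rw [← hvF x, hF0]
    rfl
  have hinj : Function.Injective M.mulVec := by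
    intro v w hvw
    have := hker (v - w) (by rw [Matrix.mulVec_sub, hvw, sub_self])
    exact sub_eq_zero.1 this
  obtain ⟨g, ginj, gne⟩ := mat_matching M hinj
  exact ⟨g, ginj, fun x => phiQ_strict φ k hφ x.val (g x).val (gne x)⟩

lemma hupQ
    (hrk : ∀ x y : P, x ⋖ y → rk y = rk x + 1)
    (hφ : ∀ x y : P, φ (Pi.single x 1) y ≠ 0 → y ⋖ x)
    (hbound : ∀ x : P, rk x ≤ r)
    (hiso : ∀ i : ℕ, 2 * i ≤ r →
      ∃ hmap : ∀ f ∈ rankLevel rk (r - i), (φ ^ (r - 2 * i)) f ∈ rankLevel rk i,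
        Function.Bijective ((φ ^ (r - 2 * i)).restrict hmap))
    (hk : 1 ≤ k) (m : ℕ) (hm : 2*m + 2 ≤ r + k) :
    ∃ g : {q : P × Fin k // rkQ rk k q = m} → {q : P × Fin k // rkQ rk k q = m + 1},
      Function.Injective g ∧ ∀ y, y.val < (g y).val := by
  classical
  set M : Matrix {q : P × Fin k // rkQ rk k q = m} {q : P × Fin k // rkQ rk k q = m+1} ℂ :=
    fun y x => PhiQ φ k (Pi.single x.val 1) y.val with hM
  have hsurj : Function.Surjective M.mulVec := by
    intro w
    set G : P × Fin k → ℂ := fun q => if h : rkQ rk k q = m then w ⟨q, h⟩ else 0 with hGdef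
    have hGsupp : ∀ q, G q ≠ 0 → rkQ rk k q = m := by
      intro q hq
      by_contra h
      exact hq (dif_neg h)
    obtain ⟨F, hFsupp, hPhiF⟩ :=
      qsurj rk φ k r hrk hφ hbound hiso hk m hm G hGsupp
    refine ⟨fun x => F x.val, ?_⟩
    funext y
    have hexp := supp_sum (rkQ rk k) (m+1) F hFsupp
    have := mulVec_phiQ rk φ k (m := m) (m' := m+1) (fun x => F x.val) y
    rw [← hM] at this
    rw [this, ← hexp, hPhiF, hGdef]
    simp [y.prop]
  have htker : ∀ u, M.transpose.mulVec u = 0 → u = 0 := by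
    intro u hu
    funext y0
    obtain ⟨v, hv⟩ := hsurj (Pi.single y0 1)
    have h1 : dotProduct u (M.mulVec v) = 0 := by
      rw [Matrix.dotProduct_mulVec, ← Matrix.mulVec_transpose, hu,
        zero_dotProduct]
    rw [hv] at h1
    have : dotProduct u (Pi.single y0 1) = u y0 := by
      rw [dotProduct]
      rw [Finset.sum_eq_single y0]
      · simp
      · intro b _ hb
        rw [Pi.single_apply, if_neg hb, mul_zero]
      · intro hq
        exact absurd (Finset.mem_univ _) hq
    rw [this] at h1
    exact h1
  have htinj : Function.Injective M.transpose.mulVec := by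
    intro v w hvw
    have := htker (v - w) (by rw [Matrix.mulVec_sub, hvw, sub_self])
    exact sub_eq_zero.1 this
  obtain ⟨g, ginj, gne⟩ := mat_matching M.transpose htinj
  refine ⟨g, ginj, fun y => ?_⟩
  have := gne y
  rw [Matrix.transpose_apply] at this
  exact phiQ_strict φ k hφ (g y).val y.val this

end QLayer3

/-- Stanley's criterion: a finite ranked poset carrying a lowering operator `φ` whose
powers `φ^(r-2i) : ℂP_{r-i} → ℂP_i` are isomorphisms is strongly Sperner: the union of
any `k` antichains is no larger than the union of some `k` rank levels. -/
theorem lowering_operator_implies_strongly_sperner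
    [Fintype P] [DecidableEq P] [PartialOrder P] (rk : P → ℕ) (r : ℕ)
    (hrk : ∀ x y : P, x ⋖ y → rk y = rk x + 1)
    (hbound : ∀ x : P, rk x ≤ r)
    (φ : (P → ℂ) →ₗ[ℂ] (P → ℂ))
    (hφ : ∀ x y : P, φ (Pi.single x 1) y ≠ 0 → y ⋖ x)
    (hiso : ∀ i : ℕ, 2 * i ≤ r →
      ∃ hmap : ∀ f ∈ rankLevel rk (r - i), (φ ^ (r - 2 * i)) f ∈ rankLevel rk i,
        Function.Bijective ((φ ^ (r - 2 * i)).restrict hmap)) :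
    ∀ (k : ℕ) (A : Fin k → Set P), (∀ m, IsAntichain (· ≤ ·) (A m)) →
      ∃ S : Finset ℕ, S.card ≤ k ∧
        (⋃ m, A m).ncard ≤ ∑ i ∈ S, {x : P | rk x = i}.ncard := by
  intro k A hA
  classical
  rcases Nat.eq_zero_or_pos k with hk0 | hk
  · subst hk0
    exact ⟨∅, le_rfl, by simp⟩
  set U : Set P := ⋃ m, A m with hU
  -- heights within the union of antichains
  set ch : P → ℕ → Prop := fun x n =>
    ∃ f : Fin (n+1) → P, StrictMono f ∧ (∀ i, f i ∈ U) ∧ f (Fin.last n) = x with hch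
  have hch_bound : ∀ x n, ch x n → n + 1 ≤ k := by
    rintro x n ⟨f, hmono, hmem, -⟩
    by_contra hc
    push_neg at hc
    have hgex : ∀ i : Fin (n+1), ∃ m : Fin k, f i ∈ A m := by
      intro i
      have := hmem i
      rw [hU, Set.mem_iUnion] at this
      exact this
    choose gg hgg using hgex
    obtain ⟨i, j, hij, hgij⟩ := Fintype.exists_ne_map_eq_of_card_lt gg (by simpa using hc)
    rcases hij.lt_or_gt with hlt | hlt
    · exact (hA (gg j)) (hgij ▸ hgg i) (hgg j) (ne_of_lt (hmono hlt)) (le_of_lt (hmono hlt))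
    · exact (hA (gg i)) (hgij ▸ hgg j) (hgg i) (ne_of_lt (hmono hlt)) (le_of_lt (hmono hlt))
  have hch0 : ∀ x, x ∈ U → ch x 0 := by
    intro x hx
    refine ⟨fun _ => x, ?_, fun _ => hx, rfl⟩
    intro i j hij
    exact absurd (Fin.lt_def.1 hij) (by omega)
  have hch_succ : ∀ x y, y ∈ U → x < y → ∀ n, ch x n → ch y (n+1) := by
    rintro x y hy hxy n ⟨f, hmono, hmem, hlast⟩
    have hfle : ∀ i : Fin (n+1), f i ≤ x := by
      intro i
      rw [← hlast]
      exact hmono.monotone (Fin.le_last i)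
    refine ⟨Fin.snoc f y, ?_, ?_, ?_⟩
    · intro i j hij
      rcases eq_or_ne j (Fin.last (n+1)) with hj | hj
      · subst hj
        rw [Fin.snoc_last]
        obtain ⟨i', rfl⟩ := Fin.exists_castSucc_eq.2 (ne_of_lt hij)
        rw [Fin.snoc_castSucc]
        exact lt_of_le_of_lt (hfle i') hxy
      · obtain ⟨j', rfl⟩ := Fin.exists_castSucc_eq.2 hj
        obtain ⟨i', rfl⟩ := Fin.exists_castSucc_eq.2
          (ne_of_lt (lt_of_lt_of_le hij (Fin.le_last _)))
        rw [Fin.snoc_castSucc, Fin.snoc_castSucc]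
        exact hmono (Fin.castSucc_lt_castSucc_iff.1 hij)
    · intro i
      rcases eq_or_ne i (Fin.last (n+1)) with hi | hi
      · subst hi
        rw [Fin.snoc_last]
        exact hy
      · obtain ⟨i', rfl⟩ := Fin.exists_castSucc_eq.2 hi
        rw [Fin.snoc_castSucc]
        exact hmem i'
    · rw [Fin.snoc_last]
  set H : P → ℕ := fun x => Nat.findGreatest (ch x) k with hH
  have hHch : ∀ x, x ∈ U → ch x (H x) := by
    intro x hx
    exact Nat.findGreatest_spec (m := 0) (by omega) (hch0 x hx)
  have hHlt : ∀ x, x ∈ U → H x < k := by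
    intro x hx
    have := hch_bound x (H x) (hHch x hx)
    omega
  have hHmono : ∀ x y, x ∈ U → y ∈ U → x < y → H x < H y := by
    intro x y hx hy hxy
    have hchy := hch_succ x y hy hxy (H x) (hHch x hx)
    have hb := hch_bound y (H x + 1) hchy
    have hle : H x + 1 ≤ Nat.findGreatest (ch y) k :=
      Nat.le_findGreatest (by omega) hchy
    have h2 : H x + 1 ≤ H y := hle
    omega
  -- matchings in P × Fin k
  set c : ℕ := (r + k) / 2 with hc
  have h2c : 2 * c ≤ r + k := by rw [hc]; omega
  have h2c' : r + k ≤ 2 * c + 1 := by rw [hc]; omega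
  have hup := fun (m : ℕ) (hm : 2*m + 2 ≤ r + k) =>
    hupQ rk φ k r hrk hφ hbound hiso hk m hm
  choose fup fupinj fuplt using hup
  have hdn := fun (m : ℕ) (hm : r + k ≤ 2*(m+1)) =>
    hdnQ rk φ k r hrk hφ hbound hiso hk m hm
  choose fdn fdninj fdnlt using hdn
  set stepu : P × Fin k → P × Fin k := fun q =>
    if h : 2 * rkQ rk k q + 2 ≤ r + k then (fup (rkQ rk k q) h ⟨q, rfl⟩).val else q
    with hstepu
  set stepd : P × Fin k → P × Fin k := fun q =>
    if h : r + k ≤ 2 * rkQ rk k q then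
      (fdn (rkQ rk k q - 1) (by omega) ⟨q, by omega⟩).val else q
    with hstepd
  have hstepu_eq : ∀ (m : ℕ) (hm : 2*m + 2 ≤ r + k) (q : P × Fin k) (hq : rkQ rk k q = m),
      stepu q = (fup m hm ⟨q, hq⟩).val := by
    intro m hm q hq
    subst hq
    simp only [hstepu]
    rw [dif_pos hm]
  have hstepd_eq : ∀ (m : ℕ) (hm : r + k ≤ 2*(m+1)) (q : P × Fin k) (hq : rkQ rk k q = m + 1),
      stepd q = (fdn m hm ⟨q, hq⟩).val := by
    intro m hm q hq
    have h1 : r + k ≤ 2 * rkQ rk k q := by omega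
    have h2 : rkQ rk k q - 1 = m := by omega
    subst h2
    simp only [hstepd]
    rw [dif_pos h1]
  have hupiter : ∀ n q, rkQ rk k q + n ≤ c →
      rkQ rk k (stepu^[n] q) = rkQ rk k q + n ∧ q ≤ stepu^[n] q := by
    intro n
    induction n with
    | zero => intro q _; simp
    | succ n ih =>
      intro q h
      rw [Function.iterate_succ_apply]
      have hg : 2 * rkQ rk k q + 2 ≤ r + k := by omega
      have he := hstepu_eq (rkQ rk k q) hg q rfl
      have hr1 : rkQ rk k (stepu q) = rkQ rk k q + 1 := by
        rw [he]
        exact (fup (rkQ rk k q) hg ⟨q, rfl⟩).prop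
      have hlt1 : q < stepu q := by
        rw [he]
        exact fuplt (rkQ rk k q) hg ⟨q, rfl⟩
      have := ih (stepu q) (by omega)
      exact ⟨by omega, le_trans (le_of_lt hlt1) this.2⟩
  have hupiterinj : ∀ n q q', rkQ rk k q = rkQ rk k q' → rkQ rk k q + n ≤ c →
      stepu^[n] q = stepu^[n] q' → q = q' := by
    intro n
    induction n with
    | zero => intro q q' _ _ h; simpa using h
    | succ n ih =>
      intro q q' hr h hs
      rw [Function.iterate_succ_apply, Function.iterate_succ_apply] at hs
      have hg : 2 * rkQ rk k q + 2 ≤ r + k := by omega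
      have he := hstepu_eq (rkQ rk k q) hg q rfl
      have he' := hstepu_eq (rkQ rk k q) hg q' hr.symm
      have hr1 : rkQ rk k (stepu q) = rkQ rk k q + 1 := by
        rw [he]
        exact (fup (rkQ rk k q) hg ⟨q, rfl⟩).prop
      have hr1' : rkQ rk k (stepu q') = rkQ rk k q + 1 := by
        rw [he']
        exact (fup (rkQ rk k q) hg ⟨q', hr.symm⟩).prop
      have hss := ih (stepu q) (stepu q') (by omega) (by omega) hs
      rw [he, he'] at hss
      have := fupinj (rkQ rk k q) hg (Subtype.ext hss)
      exact congrArg Subtype.val this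
  have hdniter : ∀ n q m, rkQ rk k q = m + n → c ≤ m →
      rkQ rk k (stepd^[n] q) = m ∧ stepd^[n] q ≤ q := by
    intro n
    induction n with
    | zero =>
      intro q m hq _
      rw [Function.iterate_zero_apply]
      exact ⟨by omega, le_rfl⟩
    | succ n ih =>
      intro q m hq hcm
      rw [Function.iterate_succ_apply]
      have hg : r + k ≤ 2*((m + n) + 1) := by omega
      have he := hstepd_eq (m + n) hg q (by omega)
      have hr1 : rkQ rk k (stepd q) = m + n := by
        rw [he]
        exact (fdn (m+n) hg ⟨q, by omega⟩).prop
      have hlt1 : stepd q < q := by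
        rw [he]
        exact fdnlt (m+n) hg ⟨q, by omega⟩
      have := ih (stepd q) m hr1 hcm
      exact ⟨this.1, le_trans this.2 (le_of_lt hlt1)⟩
  have hdniterinj : ∀ n q q' m, rkQ rk k q = m + n → rkQ rk k q' = m + n → c ≤ m →
      stepd^[n] q = stepd^[n] q' → q = q' := by
    intro n
    induction n with
    | zero => intro q q' m _ _ _ h; simpa using h
    | succ n ih =>
      intro q q' m hq hq' hcm hs
      rw [Function.iterate_succ_apply, Function.iterate_succ_apply] at hs
      have hg : r + k ≤ 2*((m + n) + 1) := by omega
      have he := hstepd_eq (m + n) hg q (by omega)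
      have he' := hstepd_eq (m + n) hg q' (by omega)
      have hr1 : rkQ rk k (stepd q) = m + n := by
        rw [he]
        exact (fdn (m+n) hg ⟨q, by omega⟩).prop
      have hr1' : rkQ rk k (stepd q') = m + n := by
        rw [he']
        exact (fdn (m+n) hg ⟨q', by omega⟩).prop
      have hss := ih (stepd q) (stepd q') m hr1 hr1' hcm hs
      rw [he, he'] at hss
      have := fdninj (m+n) hg (Subtype.ext hss)
      exact congrArg Subtype.val this
  set push : P × Fin k → P × Fin k := fun q =>
    if rkQ rk k q ≤ c then stepu^[c - rkQ rk k q] q else stepd^[rkQ rk k q - c] q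
    with hpushdef
  have hpushrank : ∀ q, rkQ rk k (push q) = c := by
    intro q
    simp only [hpushdef]
    by_cases h : rkQ rk k q ≤ c
    · rw [if_pos h]
      have := (hupiter (c - rkQ rk k q) q (by omega)).1
      omega
    · rw [if_neg h]
      exact (hdniter (rkQ rk k q - c) q c (by omega) le_rfl).1
  have hpushup : ∀ q, rkQ rk k q ≤ c → q ≤ push q := by
    intro q h
    simp only [hpushdef]
    rw [if_pos h]
    exact (hupiter (c - rkQ rk k q) q (by omega)).2
  have hpushdn : ∀ q, ¬ rkQ rk k q ≤ c → push q ≤ q := by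
    intro q h
    simp only [hpushdef]
    rw [if_neg h]
    exact (hdniter (rkQ rk k q - c) q c (by omega) le_rfl).2
  have hpushcomp : ∀ q q', push q = push q' → q ≤ q' ∨ q' ≤ q := by
    have key : ∀ q q', rkQ rk k q ≤ rkQ rk k q' → push q = push q' → q ≤ q' ∨ q' ≤ q := by
      intro q q' hle hp
      by_cases h1 : rkQ rk k q ≤ c
      · by_cases h2 : rkQ rk k q' ≤ c
        · -- both pushed up
          have hsplit : c - rkQ rk k q = (c - rkQ rk k q') + (rkQ rk k q' - rkQ rk k q) := by
            omega
          have hp' : stepu^[c - rkQ rk k q'] (stepu^[rkQ rk k q' - rkQ rk k q] q)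
              = stepu^[c - rkQ rk k q'] q' := by
            rw [← Function.iterate_add_apply, ← hsplit]
            simp only [hpushdef, if_pos h1, if_pos h2] at hp
            exact hp
          have hw := hupiter (rkQ rk k q' - rkQ rk k q) q (by omega)
          have := hupiterinj (c - rkQ rk k q') (stepu^[rkQ rk k q' - rkQ rk k q] q) q'
            (by omega) (by omega) hp'
          left
          rw [← this]
          exact hw.2
        · -- q up, q' down
          left
          have hd := hpushdn q' h2
          rw [← hp] at hd
          exact le_trans (hpushup q h1) hd
      · -- both pushed down (since rkQ q' ≥ rkQ q > c)
        have h2 : ¬ rkQ rk k q' ≤ c := by omega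
        have hsplit : rkQ rk k q' - c = (rkQ rk k q - c) + (rkQ rk k q' - rkQ rk k q) := by
          omega
        have hw := hdniter (rkQ rk k q' - rkQ rk k q) q' (rkQ rk k q) (by omega) (by omega)
        have hp' : stepd^[rkQ rk k q - c] q
            = stepd^[rkQ rk k q - c] (stepd^[rkQ rk k q' - rkQ rk k q] q') := by
          simp only [hpushdef, if_neg h1, if_neg h2] at hp
          rw [hp, hsplit, Function.iterate_add_apply]
        have := hdniterinj (rkQ rk k q - c) q (stepd^[rkQ rk k q' - rkQ rk k q] q') c
          (by omega) (by omega) le_rfl hp'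
        left
        rw [this]
        exact hw.2
    intro q q' hp
    rcases le_total (rkQ rk k q) (rkQ rk k q') with hle | hle
    · exact key q q' hle hp
    · exact (key q' q hle hp.symm).symm
  -- the injection from U into the middle level
  set ι : P → Fin k := fun x => ⟨k - 1 - H x, by omega⟩ with hι
  have hιval : ∀ x, (ι x).val = k - 1 - H x := fun x => rfl
  set Θ : P → P × Fin k := fun x => push (x, ι x) with hΘ
  have hΘinj : Set.InjOn Θ U := by
    intro x hx y hy hxy
    by_contra hne
    have hnc : ∀ a b : P, a ∈ U → b ∈ U → a ≠ b → ¬ ((a, ι a) ≤ (b, ι b)) := by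
      intro a b ha hb hab hle
      rw [Prod.mk_le_mk] at hle
      have hab' : a < b := lt_of_le_of_ne hle.1 hab
      have hm := hHmono a b ha hb hab'
      have h1 := hHlt a ha
      have h2 := hHlt b hb
      have hvv : (ι b).val < (ι a).val := by
        rw [hιval, hιval]
        omega
      exact absurd hle.2 (by rw [Fin.le_def]; omega)
    rcases hpushcomp (x, ι x) (y, ι y) hxy with h | h
    · exact hnc x y hx hy hne h
    · exact hnc y x hy hx (Ne.symm hne) h
  have h1 : U.ncard ≤ ({q : P × Fin k | rkQ rk k q = c}).ncard := by
    rw [← Set.ncard_image_of_injOn hΘinj]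
    refine Set.ncard_le_ncard ?_ (Set.toFinite _)
    rintro _ ⟨x, hx, rfl⟩
    exact hpushrank (x, ι x)
  set S : Finset ℕ := Finset.image (fun a : Fin k => c - a.val) Finset.univ with hS
  have hScard : S.card ≤ k := le_trans Finset.card_image_le (by simp)
  have h2 : ({q : P × Fin k | rkQ rk k q = c}).ncard ≤ ∑ i ∈ S, {x : P | rk x = i}.ncard := by
    have hL : ({q : P × Fin k | rkQ rk k q = c}).ncard
        = (Finset.univ.filter (fun q : P × Fin k => rkQ rk k q = c)).card := by
      rw [← Set.ncard_coe_finset]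
      congr 1
      ext q
      simp
    have hR : ∀ i : ℕ, ({x : P | rk x = i}).ncard
        = (Finset.univ.filter (fun x : P => rk x = i)).card := by
      intro i
      rw [← Set.ncard_coe_finset]
      congr 1
      ext x
      simp
    rw [hL]
    have hfib : (Finset.univ.filter (fun q : P × Fin k => rkQ rk k q = c)).card
        = ∑ b : Fin k, ((Finset.univ.filter (fun q : P × Fin k => rkQ rk k q = c)).filter
            (fun q => q.2 = b)).card := by
      exact Finset.card_eq_sum_card_fiberwise (fun q _ => Finset.mem_univ q.2)
    rw [hfib]
    have hfib2 : ∀ b : Fin k,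
        ((Finset.univ.filter (fun q : P × Fin k => rkQ rk k q = c)).filter
            (fun q => q.2 = b)).card
          = (Finset.univ.filter (fun x : P => rk x + b.val = c)).card := by
      intro b
      apply Finset.card_bij (fun q _ => q.1)
      · intro q hq
        simp only [Finset.mem_filter, Finset.mem_univ, true_and] at hq ⊢
        obtain ⟨hq1, hq2⟩ := hq
        rw [← hq2]
        exact hq1
      · intro q hq q' hq' hqq
        simp only [Finset.mem_filter, Finset.mem_univ, true_and] at hq hq'
        exact Prod.ext_iff.2 ⟨hqq, hq.2.trans hq'.2.symm⟩
      · intro x hx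
        simp only [Finset.mem_filter, Finset.mem_univ, true_and] at hx
        exact ⟨(x, b), by simp only [Finset.mem_filter, Finset.mem_univ, true_and]; exact ⟨hx, trivial⟩, rfl⟩
    rw [Finset.sum_congr rfl (fun b _ => hfib2 b)]
    have hzero : ∀ b : Fin k, ¬ (b.val ≤ c) →
        (Finset.univ.filter (fun x : P => rk x + b.val = c)).card = 0 := by
      intro b hb
      rw [Finset.card_eq_zero]
      rw [Finset.filter_eq_empty_iff]
      intro x _
      omega
    rw [← Finset.sum_subset (Finset.filter_subset (fun b : Fin k => b.val ≤ c) Finset.univ)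
      (fun b _ hb => hzero b (by simpa using hb))]
    have hcongr : ∀ b ∈ Finset.univ.filter (fun b : Fin k => b.val ≤ c),
        (Finset.univ.filter (fun x : P => rk x + b.val = c)).card
          = (Finset.univ.filter (fun x : P => rk x = c - b.val)).card := by
      intro b hb
      simp only [Finset.mem_filter, Finset.mem_univ, true_and] at hb
      congr 1
      apply Finset.filter_congr
      intro x _
      constructor
      · intro h; omega
      · intro h; omega
    rw [Finset.sum_congr rfl hcongr]
    have himg : ∑ i ∈ (Finset.univ.filter (fun b : Fin k => b.val ≤ c)).image
          (fun b : Fin k => c - b.val), (Finset.univ.filter (fun x : P => rk x = i)).card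
        = ∑ b ∈ Finset.univ.filter (fun b : Fin k => b.val ≤ c),
            (Finset.univ.filter (fun x : P => rk x = c - b.val)).card :=
      Finset.sum_image (by
        intro a ha b hb hab
        simp only [Finset.mem_coe, Finset.mem_filter, Finset.mem_univ, true_and] at ha hb hab
        exact Fin.ext (by omega))
    rw [← himg]
    have hsub : (Finset.univ.filter (fun b : Fin k => b.val ≤ c)).image
        (fun b : Fin k => c - b.val) ⊆ S := by
      intro i hi
      rw [Finset.mem_image] at hi
      obtain ⟨b, hb, rfl⟩ := hi
      rw [hS]
      exact Finset.mem_image_of_mem _ (Finset.mem_univ b)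
    refine le_trans (Finset.sum_le_sum_of_subset hsub) ?_
    rw [Finset.sum_congr rfl (fun i _ => (hR i).symm)]
  exact ⟨S, hScard, le_trans h1 h2⟩
end

section
/- For any permutation σ ∈ S_n, applying the operator ∇ = Σ_i ∂/∂x_i to the Schubert polynomial 𝔖_σ yields ∇𝔖_σ = Σ i · 𝔖_{σs_i}, where the sum is over all i such that σs_i ⋖ σ is a cover in the right weak order (i.e., ℓ(σs_i) = ℓ(σ) - 1). -/
open Equiv MvPolynomial

namespace SchubAux

variable {n : ℕ}

lemma exists_word (σ : Equiv.Perm (Fin (n+1))) :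
    ∃ l : List (Fin n), (l.map simpleT).prod = σ := by
  have hσ : σ ∈ Submonoid.closure (Set.range fun i : Fin n ↦ Equiv.swap i.castSucc i.succ) := by
    rw [Equiv.Perm.mclosure_swap_castSucc_succ n]; trivial
  induction hσ using Submonoid.closure_induction with
  | mem x hx => obtain ⟨i, rfl⟩ := hx; exact ⟨[i], by simp [simpleT]⟩
  | one => exact ⟨[], by simp⟩
  | mul x y _ _ hx hy =>
      obtain ⟨l1, h1⟩ := hx; obtain ⟨l2, h2⟩ := hy
      exact ⟨l1 ++ l2, by simp [h1, h2]⟩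

lemma lenSet_nonempty (σ : Equiv.Perm (Fin (n+1))) :
    {k | ∃ l : List (Fin n), l.length = k ∧ (l.map simpleT).prod = σ}.Nonempty := by
  obtain ⟨l, hl⟩ := exists_word σ
  exact ⟨l.length, l, rfl, hl⟩

lemma len_le {σ : Equiv.Perm (Fin (n+1))} {l : List (Fin n)}
    (h : (l.map simpleT).prod = σ) : len σ ≤ l.length :=
  Nat.sInf_le ⟨l, rfl, h⟩

lemma len_spec (σ : Equiv.Perm (Fin (n+1))) :
    ∃ l : List (Fin n), l.length = len σ ∧ (l.map simpleT).prod = σ :=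
  Nat.sInf_mem (lenSet_nonempty σ)

lemma len_one : len (1 : Equiv.Perm (Fin (n+1))) = 0 :=
  Nat.le_antisymm (len_le (l := []) (by simp)) (Nat.zero_le _)

lemma simpleT_inv (i : Fin n) : (simpleT i)⁻¹ = simpleT i := Equiv.swap_inv _ _

lemma simpleT_mul_self (i : Fin n) : simpleT i * simpleT i = 1 := Equiv.swap_mul_self _ _

lemma prod_reverse (l : List (Fin n)) :
    (l.reverse.map simpleT).prod = ((l.map simpleT).prod)⁻¹ := by
  induction l with
  | nil => simp
  | cons i t ih =>
      rw [List.reverse_cons, List.map_append, List.prod_append, ih]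
      simp [simpleT_inv, mul_inv_rev]

lemma len_inv (σ : Equiv.Perm (Fin (n+1))) : len σ⁻¹ = len σ := by
  have key : ∀ τ : Equiv.Perm (Fin (n+1)), len τ⁻¹ ≤ len τ := by
    intro τ
    obtain ⟨l, hlen, hprod⟩ := len_spec τ
    have := len_le (σ := τ⁻¹) (l := l.reverse) (by rw [prod_reverse, hprod])
    simpa [hlen] using this
  exact Nat.le_antisymm (key σ) (by simpa using key σ⁻¹)

lemma len_mul_simple_le (σ : Equiv.Perm (Fin (n+1))) (i : Fin n) :
    len (σ * simpleT i) ≤ len σ + 1 := by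
  obtain ⟨l, hlen, hprod⟩ := len_spec σ
  have := len_le (σ := σ * simpleT i) (l := l ++ [i]) (by simp [hprod])
  simpa [hlen] using this

lemma len_le_mul_simple (σ : Equiv.Perm (Fin (n+1))) (i : Fin n) :
    len σ ≤ len (σ * simpleT i) + 1 := by
  have := len_mul_simple_le (σ * simpleT i) i
  rwa [mul_assoc, simpleT_mul_self, mul_one] at this

lemma sign_simpleT (i : Fin n) : Equiv.Perm.sign (simpleT i) = -1 :=
  Equiv.Perm.sign_swap (by simp [Fin.ext_iff])

lemma sign_eq_pow_len (σ : Equiv.Perm (Fin (n+1))) :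
    Equiv.Perm.sign σ = (-1) ^ (len σ) := by
  obtain ⟨l, hlen, hprod⟩ := len_spec σ
  rw [← hlen, ← hprod]
  clear hlen hprod
  induction l with
  | nil => simp
  | cons i t ih => simp [pow_succ, ih, sign_simpleT, mul_comm]

lemma len_ne_mul_simple (σ : Equiv.Perm (Fin (n+1))) (i : Fin n) :
    len (σ * simpleT i) ≠ len σ := by
  intro h
  have h1 := sign_eq_pow_len (σ * simpleT i)
  rw [h, map_mul, sign_simpleT, sign_eq_pow_len σ] at h1
  have h2 : ((-1:ℤˣ)^ len σ) * (-1) = ((-1:ℤˣ)^ len σ) * 1 := by rw [mul_one]; exact h1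
  have := mul_left_cancel h2
  exact absurd this (by decide)





/-- number of inversions -/
def invNum (σ : Equiv.Perm (Fin (n+1))) : ℕ :=
  (Finset.univ.filter fun p : Fin (n+1) × Fin (n+1) => p.1 < p.2 ∧ σ p.2 < σ p.1).card

lemma swap_lt (i : Fin n) {a b : Fin (n+1)} (hab : a < b)
    (h : ¬(a = i.castSucc ∧ b = i.succ)) :
    Equiv.swap i.castSucc i.succ a < Equiv.swap i.castSucc i.succ b := by
  have hc : (i.castSucc : ℕ) = (i : ℕ) := rfl
  have hc' : (i.succ : ℕ) = (i : ℕ) + 1 := rfl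
  simp only [Equiv.swap_apply_def]
  rw [Fin.lt_def] at hab ⊢
  split_ifs with h1 h2 h3 h4 h5 h6 h7 h8 <;>
    simp only [Fin.ext_iff, not_and] at * <;> omega

lemma invSet_mul_simple (σ : Equiv.Perm (Fin (n+1))) (i : Fin n)
    (ha : σ i.castSucc < σ i.succ) :
    invNum (σ * simpleT i) = invNum σ + 1 := by
  classical
  set c := Fin.castSucc i with hc
  set c' := Fin.succ i with hc'
  set s := Equiv.swap c c' with hs
  set A := (Finset.univ.filter fun p : Fin (n+1) × Fin (n+1) => p.1 < p.2 ∧ σ p.2 < σ p.1)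
    with hA
  set B := (Finset.univ.filter fun p : Fin (n+1) × Fin (n+1) =>
    p.1 < p.2 ∧ (σ * simpleT i) p.2 < (σ * simpleT i) p.1) with hB
  have happ : ∀ x, (σ * simpleT i) x = σ (s x) := fun x => rfl
  have hcc' : c < c' := Fin.castSucc_lt_succ (i := i)
  have hccB : (c, c') ∈ B := by
    simp only [hB, Finset.mem_filter, Finset.mem_univ, true_and]
    refine ⟨hcc', ?_⟩
    rw [happ, happ, hs, Equiv.swap_apply_left, Equiv.swap_apply_right]
    exact ha
  have hccA : (c, c') ∉ A := by
    simp only [hA, Finset.mem_filter, Finset.mem_univ, true_and, not_and]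
    intro _
    exact not_lt.2 ha.le
  -- bijection between A and B.erase (c,c')
  have hcard : A.card = (B.erase (c, c')).card := by
    apply Finset.card_bij (fun p _ => (s p.1, s p.2))
    · rintro ⟨a, b⟩ hp
      simp only [hA, Finset.mem_filter, Finset.mem_univ, true_and] at hp
      obtain ⟨h1, h2⟩ := hp
      have hne : ¬(a = c ∧ b = c') := by
        rintro ⟨rfl, rfl⟩; exact hccA (by simp [hA, h1, h2])
      have hlt : s a < s b := swap_lt i h1 hne
      refine Finset.mem_erase.2 ⟨?_, ?_⟩
      · intro hcon
        have h1' : s a = c := (Prod.ext_iff.1 hcon).1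
        have h2' : s b = c' := (Prod.ext_iff.1 hcon).2
        have : a = s c := by rw [← h1']; simp [hs]
        have hb : b = s c' := by rw [← h2']; simp [hs]
        rw [hs, Equiv.swap_apply_left] at this
        rw [hs, Equiv.swap_apply_right] at hb
        subst this; subst hb
        exact absurd h1 (not_lt.2 hcc'.le)
      · simp only [hB, Finset.mem_filter, Finset.mem_univ, true_and]
        refine ⟨hlt, ?_⟩
        rw [happ, happ]
        have : s (s a) = a := by simp [hs]
        have hb : s (s b) = b := by simp [hs]
        rw [this, hb]
        exact h2
    · rintro ⟨a, b⟩ ha' ⟨a', b'⟩ hb' hab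
      have h1 : s a = s a' := (Prod.ext_iff.1 hab).1
      have h2 : s b = s b' := (Prod.ext_iff.1 hab).2
      exact Prod.ext (s.injective h1) (s.injective h2)
    · rintro ⟨u, v⟩ hq
      rw [Finset.mem_erase] at hq
      obtain ⟨hne, hq⟩ := hq
      simp only [hB, Finset.mem_filter, Finset.mem_univ, true_and] at hq
      obtain ⟨h1, h2⟩ := hq
      rw [happ, happ] at h2
      have hneuv : ¬(u = c ∧ v = c') := by
        rintro ⟨rfl, rfl⟩; exact hne rfl
      have hlt : s u < s v := swap_lt i h1 hneuv
      refine ⟨(s u, s v), ?_, ?_⟩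
      · simp only [hA, Finset.mem_filter, Finset.mem_univ, true_and]
        exact ⟨hlt, h2⟩
      · have h3 : s (s u) = u := by simp [hs]
        have h4 : s (s v) = v := by simp [hs]
        simp [h3, h4]
  have : B.card = (B.erase (c, c')).card + 1 := by
    rw [Finset.card_erase_of_mem hccB]
    have : 1 ≤ B.card := Finset.card_pos.2 ⟨_, hccB⟩
    omega
  rw [invNum, invNum, ← hA, ← hB, this, hcard]

lemma invNum_descent (σ : Equiv.Perm (Fin (n+1))) (i : Fin n)
    (hd : σ i.succ < σ i.castSucc) :
    invNum σ = invNum (σ * simpleT i) + 1 := by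
  have h1 : (σ * simpleT i) i.castSucc < (σ * simpleT i) i.succ := by
    have e1 : (σ * simpleT i) i.castSucc = σ i.succ := by
      simp [simpleT, Equiv.Perm.mul_apply]
    have e2 : (σ * simpleT i) i.succ = σ i.castSucc := by
      simp [simpleT, Equiv.Perm.mul_apply]
    rw [e1, e2]; exact hd
  have := invSet_mul_simple (σ * simpleT i) i h1
  rw [mul_assoc, simpleT_mul_self, mul_one] at this
  omega

lemma apply_ne (σ : Equiv.Perm (Fin (n+1))) (i : Fin n) :
    σ i.castSucc ≠ σ i.succ :=
  fun h => absurd (σ.injective h) (Fin.castSucc_lt_succ (i := i)).ne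

lemma invNum_prod_le (l : List (Fin n)) :
    invNum ((l.map simpleT).prod : Equiv.Perm (Fin (n+1))) ≤ l.length := by
  induction l using List.reverseRecOn with
  | nil =>
      simp only [List.map_nil, List.prod_nil, List.length_nil, Nat.le_zero, invNum,
        Finset.card_eq_zero]
      ext p
      simp only [Finset.mem_filter, Finset.mem_univ, true_and, Finset.notMem_empty,
        iff_false, not_and, Equiv.Perm.one_apply]
      intro h1; have h2 := (Multiset.mem_filter.1 h1).2; exact lt_asymm h2.1 h2.2
  | append_singleton t i ih =>
      rw [List.map_append, List.prod_append]
      simp only [List.map_cons, List.map_nil, List.prod_cons, List.prod_nil, mul_one]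
      set τ := (t.map simpleT).prod
      rcases lt_or_gt_of_ne (apply_ne τ i) with h | h
      · have := invSet_mul_simple τ i h
        simp only [List.length_append, List.length_cons, List.length_nil]
        omega
      · have := invNum_descent τ i h
        simp only [List.length_append, List.length_cons, List.length_nil]
        omega

lemma eq_one_of_no_descent (σ : Equiv.Perm (Fin (n+1)))
    (h : ∀ i : Fin n, σ i.castSucc < σ i.succ) : σ = 1 := by
  have hmono : StrictMono σ := Fin.strictMono_iff_lt_succ.2 h
  have hr : Set.range (⇑σ) = Set.range (id : Fin (n+1) → Fin (n+1)) := by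
    simp [Set.range_eq_univ.2 σ.surjective]
  have : (⇑σ : Fin (n+1) → Fin (n+1)) = id := ((StrictMono.range_inj hmono strictMono_id).1 hr)
  ext x
  have := congrFun this x
  simpa using congrArg Fin.val this

lemma descent_or (σ : Equiv.Perm (Fin (n+1))) (i : Fin n) :
    σ i.castSucc < σ i.succ ∨ σ i.succ < σ i.castSucc :=
  lt_or_gt_of_ne (apply_ne σ i)

lemma len_eq_invNum (σ : Equiv.Perm (Fin (n+1))) : len σ = invNum σ := by
  refine Nat.le_antisymm ?_ ?_
  · -- strong induction on invNum
    generalize hm : invNum σ = m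
    induction m using Nat.strong_induction_on generalizing σ with
    | _ m ih =>
      by_cases h1 : σ = 1
      · subst h1; simp [len_one]
      · have hdesc : ∃ i : Fin n, σ i.succ < σ i.castSucc := by
          by_contra hno
          push_neg at hno
          exact h1 (eq_one_of_no_descent σ fun i =>
            ((descent_or σ i).resolve_right (not_lt.2 (hno i))))
        obtain ⟨i, hi⟩ := hdesc
        have hstep := invNum_descent σ i hi
        have hlt : invNum (σ * simpleT i) < m := by omega
        have ihh := ih _ hlt (σ * simpleT i) rfl
        have := len_le_mul_simple σ i
        omega
  · obtain ⟨l, hlen, hprod⟩ := len_spec σ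
    rw [← hlen, ← hprod]
    exact invNum_prod_le l
lemma len_ascent {σ : Equiv.Perm (Fin (n+1))} {i : Fin n}
    (h : σ i.castSucc < σ i.succ) : len (σ * simpleT i) = len σ + 1 := by
  rw [len_eq_invNum, len_eq_invNum]; exact invSet_mul_simple σ i h

lemma len_descent {σ : Equiv.Perm (Fin (n+1))} {i : Fin n}
    (h : σ i.succ < σ i.castSucc) : len σ = len (σ * simpleT i) + 1 := by
  rw [len_eq_invNum, len_eq_invNum]; exact invNum_descent σ i h

lemma len_mul_simple_cases (σ : Equiv.Perm (Fin (n+1))) (i : Fin n) :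
    len (σ * simpleT i) = len σ + 1 ∨ len σ = len (σ * simpleT i) + 1 :=
  (descent_or σ i).imp len_ascent len_descent

lemma len_simple_mul (σ : Equiv.Perm (Fin (n+1))) (i : Fin n) :
    len (simpleT i * σ) = len (σ⁻¹ * simpleT i) := by
  have h := len_inv (simpleT i * σ)
  rw [mul_inv_rev, simpleT_inv] at h
  exact h.symm

lemma len_simple_mul_cases (σ : Equiv.Perm (Fin (n+1))) (i : Fin n) :
    len (simpleT i * σ) = len σ + 1 ∨ len σ = len (simpleT i * σ) + 1 := by
  rw [len_simple_mul, ← len_inv σ]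
  exact len_mul_simple_cases σ⁻¹ i

lemma eq_rev_of_all_descent (σ : Equiv.Perm (Fin (n+1)))
    (h : ∀ i : Fin n, σ i.succ < σ i.castSucc) : σ = Fin.revPerm := by
  have h1 : (Fin.revPerm * σ : Equiv.Perm (Fin (n+1))) = 1 := by
    apply eq_one_of_no_descent
    intro i
    show (Fin.revPerm : Equiv.Perm (Fin (n+1))) (σ i.castSucc) <
      (Fin.revPerm : Equiv.Perm (Fin (n+1))) (σ i.succ)
    simp only [Fin.revPerm_apply]
    exact Fin.rev_lt_rev.2 (h i)
  calc σ = (Fin.revPerm * Fin.revPerm) * σ := by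
            rw [show (Fin.revPerm * Fin.revPerm : Equiv.Perm (Fin (n+1))) = 1 from
              Equiv.ext fun x => by simp, one_mul]
       _ = Fin.revPerm * (Fin.revPerm * σ) := by rw [mul_assoc]
       _ = Fin.revPerm := by rw [h1, mul_one]

lemma rev_inv_eq : (Fin.revPerm : Equiv.Perm (Fin (n+1)))⁻¹ = Fin.revPerm := rfl

lemma exists_left_ascent {σ : Equiv.Perm (Fin (n+1))} (h : σ ≠ Fin.revPerm) :
    ∃ i : Fin n, len (simpleT i * σ) = len σ + 1 := by
  have hinv : σ⁻¹ ≠ Fin.revPerm := by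
    intro hc; exact h (by rw [← inv_inv σ, hc, rev_inv_eq])
  have : ∃ i : Fin n, σ⁻¹ i.castSucc < σ⁻¹ i.succ := by
    by_contra hno
    push_neg at hno
    exact hinv (eq_rev_of_all_descent _ fun i =>
      ((descent_or σ⁻¹ i).resolve_left (not_lt.2 (hno i))))
  obtain ⟨i, hi⟩ := this
  refine ⟨i, ?_⟩
  rw [len_simple_mul, len_ascent hi, len_inv]

lemma rev_descent (i : Fin n) :
    (Fin.revPerm : Equiv.Perm (Fin (n+1))) i.succ < Fin.revPerm i.castSucc := by
  simp only [Fin.revPerm_apply]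
  exact Fin.rev_lt_rev.2 (Fin.castSucc_lt_succ (i := i))

lemma len_rev_mul_simple (i : Fin n) :
    len (Fin.revPerm : Equiv.Perm (Fin (n+1))) =
      len (Fin.revPerm * simpleT i : Equiv.Perm (Fin (n+1))) + 1 :=
  len_descent (rev_descent i)

lemma invNum_le_rev (σ : Equiv.Perm (Fin (n+1))) :
    invNum σ ≤ invNum (Fin.revPerm : Equiv.Perm (Fin (n+1))) := by
  have hr : (Finset.univ.filter fun p : Fin (n+1) × Fin (n+1) =>
      p.1 < p.2 ∧ (Fin.revPerm : Equiv.Perm (Fin (n+1))) p.2 < Fin.revPerm p.1) =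
      (Finset.univ.filter fun p : Fin (n+1) × Fin (n+1) => p.1 < p.2) := by
    apply Finset.filter_congr
    intro p _
    simp only [Fin.revPerm_apply, Fin.rev_lt_rev, and_iff_left_iff_imp]
    exact fun h => h
  rw [invNum, invNum, hr]
  apply Finset.card_le_card
  intro p hp
  rw [Finset.mem_filter] at hp ⊢
  exact ⟨hp.1, hp.2.1⟩

lemma len_le_len_rev (σ : Equiv.Perm (Fin (n+1))) :
    len σ ≤ len (Fin.revPerm : Equiv.Perm (Fin (n+1))) := by
  rw [len_eq_invNum, len_eq_invNum]; exact invNum_le_rev σ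

lemma eq_rev_of_len_eq {σ : Equiv.Perm (Fin (n+1))}
    (h : len σ = len (Fin.revPerm : Equiv.Perm (Fin (n+1)))) : σ = Fin.revPerm := by
  apply eq_rev_of_all_descent
  intro i
  rw [len_eq_invNum, len_eq_invNum] at h
  have hsub : (Finset.univ.filter fun p : Fin (n+1) × Fin (n+1) =>
      p.1 < p.2 ∧ σ p.2 < σ p.1) ⊆
      (Finset.univ.filter fun p : Fin (n+1) × Fin (n+1) => p.1 < p.2) := by
    intro p hp
    rw [Finset.mem_filter] at hp ⊢
    exact ⟨hp.1, hp.2.1⟩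
  have hr : (Finset.univ.filter fun p : Fin (n+1) × Fin (n+1) =>
      p.1 < p.2 ∧ (Fin.revPerm : Equiv.Perm (Fin (n+1))) p.2 < Fin.revPerm p.1) =
      (Finset.univ.filter fun p : Fin (n+1) × Fin (n+1) => p.1 < p.2) := by
    apply Finset.filter_congr
    intro p _
    simp only [Fin.revPerm_apply, Fin.rev_lt_rev, and_iff_left_iff_imp]
    exact fun h => h
  rw [invNum, invNum, hr] at h
  have heq := Finset.eq_of_subset_of_card_le hsub (le_of_eq h.symm)
  have hmem : ((i.castSucc, i.succ) : Fin (n+1) × Fin (n+1)) ∈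
      (Finset.univ.filter fun p : Fin (n+1) × Fin (n+1) => p.1 < p.2) := by
    rw [Finset.mem_filter]
    exact ⟨Finset.mem_univ _, Fin.castSucc_lt_succ (i := i)⟩
  rw [← heq, Finset.mem_filter] at hmem
  exact hmem.2.2

/-! ### Polynomial lemmas -/

lemma pderiv_prod_zero (k : Fin (n+1)) (s : Finset (Fin (n+1))) (e : Fin (n+1) → ℕ)
    (hk : k ∉ s) :
    pderiv k (∏ m ∈ s, (X m : MvPolynomial (Fin (n+1)) ℂ) ^ e m) = 0 := by
  classical
  induction s using Finset.induction_on with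
  | empty => simp
  | @insert a s ha ih =>
      rw [Finset.prod_insert ha, pderiv_mul, ih (fun hc => hk (Finset.mem_insert_of_mem hc)),
        mul_zero, add_zero, pderiv_pow, pderiv_X_of_ne, mul_zero, zero_mul]
      exact fun hc => hk (hc ▸ Finset.mem_insert_self a s)

lemma pderiv_prod_pow (k : Fin (n+1)) (e : Fin (n+1) → ℕ) :
    pderiv k (∏ m, (X m : MvPolynomial (Fin (n+1)) ℂ) ^ e m) =
      (e k : ℂ) • ∏ m, (X m : MvPolynomial (Fin (n+1)) ℂ) ^ (if m = k then e m - 1 else e m) := by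
  classical
  rw [← Finset.mul_prod_erase Finset.univ _ (Finset.mem_univ k), pderiv_mul,
    pderiv_prod_zero k _ e (Finset.notMem_erase k _), mul_zero, add_zero,
    pderiv_pow, pderiv_X_self, mul_one,
    ← Finset.mul_prod_erase Finset.univ
      (fun m => (X m : MvPolynomial (Fin (n+1)) ℂ) ^ (if m = k then e m - 1 else e m))
      (Finset.mem_univ k)]
  rw [if_pos rfl]
  have hprod : ∏ m ∈ Finset.univ.erase k,
      (X m : MvPolynomial (Fin (n+1)) ℂ) ^ (if m = k then e m - 1 else e m) =
      ∏ m ∈ Finset.univ.erase k, (X m : MvPolynomial (Fin (n+1)) ℂ) ^ e m :=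
    Finset.prod_congr rfl fun m hm => by rw [if_neg (Finset.mem_erase.1 hm).1]
  rw [smul_eq_C_mul, hprod, ← mul_assoc]
  congr 1

lemma nabla_sub_mul (a b : Fin (n+1)) (f : MvPolynomial (Fin (n+1)) ℂ) :
    ∑ k, pderiv k ((X a - X b) * f) = (X a - X b) * ∑ k, pderiv k f := by
  classical
  have h : ∀ k, pderiv k ((X a - X b) * f)
      = (pderiv k (X a) - pderiv k (X b)) * f + (X a - X b) * pderiv k f := by
    intro k; rw [pderiv_mul, map_sub]
  rw [Finset.sum_congr rfl (fun k _ => h k), Finset.sum_add_distrib, ← Finset.sum_mul,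
    ← Finset.mul_sum]
  have ha : ∀ c : Fin (n+1), ∑ k : Fin (n+1), pderiv k (X c : MvPolynomial (Fin (n+1)) ℂ) = 1 := by
    intro c
    rw [Finset.sum_eq_single c (fun k _ hk => pderiv_X_of_ne (Ne.symm hk)) (by simp)]
    exact pderiv_X_self c
  rw [Finset.sum_sub_distrib, ha, ha, sub_self, zero_mul, zero_add]

lemma nabla_rename (e : Equiv.Perm (Fin (n+1))) (f : MvPolynomial (Fin (n+1)) ℂ) :
    ∑ k, pderiv k (rename e f) = rename e (∑ k, pderiv k f) := by
  rw [map_sum]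
  exact (Fintype.sum_equiv e (fun j => rename e (pderiv j f))
    (fun k => pderiv k (rename e f))
    (fun j => (pderiv_rename e.injective j f).symm)).symm

lemma rename_swap_swap (a b : Fin (n+1)) (p : MvPolynomial (Fin (n+1)) ℂ) :
    rename (Equiv.swap a b) (rename (Equiv.swap a b) p) = p := by
  rw [rename_rename]
  have h : (⇑(Equiv.swap a b) ∘ ⇑(Equiv.swap a b)) = id :=
    funext fun x => Equiv.swap_apply_self a b x
  rw [h, rename_id_apply]

lemma X_sub_ne_zero {a b : Fin (n+1)} (h : a ≠ b) :
    (X a - X b : MvPolynomial (Fin (n+1)) ℂ) ≠ 0 :=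
  sub_ne_zero.2 fun hh => h (MvPolynomial.X_injective hh)

lemma cs_ne (i : Fin n) : (i.castSucc : Fin (n+1)) ≠ i.succ := (Fin.castSucc_lt_succ (i := i)).ne

lemma rename_swap_prod (a b : Fin (n+1)) (e : Fin (n+1) → ℕ) :
    rename (Equiv.swap a b) (∏ m, (X m : MvPolynomial (Fin (n+1)) ℂ) ^ e m)
      = ∏ m, (X m : MvPolynomial (Fin (n+1)) ℂ) ^ e (Equiv.swap a b m) := by
  rw [map_prod]
  simp only [map_pow, rename_X]
  refine Fintype.prod_equiv (Equiv.swap a b)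
    (fun m => (X m : MvPolynomial (Fin (n+1)) ℂ) ^ e (Equiv.swap a b m))
    (fun m => (X (Equiv.swap a b m) : MvPolynomial (Fin (n+1)) ℂ) ^ e m) ?_ |>.symm
  intro m
  rw [Equiv.swap_apply_self]

lemma X_mul_prod_pow (a : Fin (n+1)) (f : Fin (n+1) → ℕ) :
    (X a : MvPolynomial (Fin (n+1)) ℂ) * ∏ m, X m ^ f m
      = ∏ m, (X m : MvPolynomial (Fin (n+1)) ℂ) ^ (f m + if m = a then 1 else 0) := by
  classical
  rw [← Finset.mul_prod_erase Finset.univ (fun m => (X m : MvPolynomial (Fin (n+1)) ℂ) ^ f m)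
      (Finset.mem_univ a),
    ← Finset.mul_prod_erase Finset.univ
      (fun m => (X m : MvPolynomial (Fin (n+1)) ℂ) ^ (f m + if m = a then 1 else 0))
      (Finset.mem_univ a)]
  rw [if_pos rfl, ← mul_assoc, ← pow_succ']
  congr 1
  exact Finset.prod_congr rfl fun m hm => by rw [if_neg (Finset.mem_erase.1 hm).1, add_zero]

end SchubAux

/-- `S` is the family of Schubert polynomials: `S w₀ = x₁^{n-1} ⋯ x_{n-1}`, and
`S (sᵢ σ)` is the `i`-th divided difference of `S σ` when `ℓ(sᵢσ) = ℓ(σ) - 1`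
(stated multiplied through by `xᵢ - xᵢ₊₁`). -/
def IsSchubertFamily {n : ℕ} (S : Equiv.Perm (Fin (n+1)) → MvPolynomial (Fin (n+1)) ℂ) : Prop :=
  S Fin.revPerm = ∏ i : Fin (n+1), X i ^ (n - (i : ℕ)) ∧
  ∀ (σ : Equiv.Perm (Fin (n+1))) (i : Fin n), len σ = len (simpleT i * σ) + 1 →
    (X i.castSucc - X i.succ) * S (simpleT i * σ) =
      S σ - rename (Equiv.swap i.castSucc i.succ) (S σ)

namespace SchubAux

lemma S_symm {S : Equiv.Perm (Fin (n+1)) → MvPolynomial (Fin (n+1)) ℂ}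
    (hS : IsSchubertFamily S) {τ : Equiv.Perm (Fin (n+1))} {i : Fin n}
    (h : len (simpleT i * τ) = len τ + 1) :
    rename (Equiv.swap i.castSucc i.succ) (S τ) = S τ := by
  have h2 := hS.2 (simpleT i * τ) i
    (by rw [← mul_assoc, simpleT_mul_self, one_mul]; exact h)
  rw [← mul_assoc, simpleT_mul_self, one_mul] at h2
  have h3 := congrArg (rename (Equiv.swap i.castSucc i.succ)) h2
  rw [map_mul, map_sub, map_sub, rename_X, rename_X, Equiv.swap_apply_left,
    Equiv.swap_apply_right, rename_swap_swap] at h3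
  have h4 : (X i.castSucc - X i.succ) * rename (Equiv.swap i.castSucc i.succ) (S τ)
      = (X i.castSucc - X i.succ) * S τ := by linear_combination -h3 - h2
  exact mul_left_cancel₀ (X_sub_ne_zero (cs_ne i)) h4

lemma step {S : Equiv.Perm (Fin (n+1)) → MvPolynomial (Fin (n+1)) ℂ}
    (hS : IsSchubertFamily S) {σ : Equiv.Perm (Fin (n+1))} {i : Fin n}
    (hasc : len (simpleT i * σ) = len σ + 1)
    (IH : ∑ k : Fin (n+1), pderiv k (S (simpleT i * σ)) =
      ∑ j ∈ Finset.univ.filter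
          (fun j : Fin n => len (simpleT i * σ) = len ((simpleT i * σ) * simpleT j) + 1),
        (((j : ℕ) + 1 : ℂ)) • S ((simpleT i * σ) * simpleT j)) :
    ∑ k : Fin (n+1), pderiv k (S σ) =
      ∑ j ∈ Finset.univ.filter (fun j : Fin n => len σ = len (σ * simpleT j) + 1),
        (((j : ℕ) + 1 : ℂ)) • S (σ * simpleT j) := by
  classical
  set σ' := simpleT i * σ with hσ'
  have hss : simpleT i * σ' = σ := by rw [hσ', ← mul_assoc, simpleT_mul_self, one_mul]
  have hrec := hS.2 σ' i (by rw [hss]; exact hasc)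
  rw [hss] at hrec
  -- apply ∇ to both sides of hrec
  have hkey : (X i.castSucc - X i.succ) * ∑ k : Fin (n+1), pderiv k (S σ)
      = (∑ k : Fin (n+1), pderiv k (S σ')) -
        rename (Equiv.swap i.castSucc i.succ) (∑ k : Fin (n+1), pderiv k (S σ')) := by
    rw [← nabla_sub_mul, ← nabla_rename, ← Finset.sum_sub_distrib]
    refine Finset.sum_congr rfl fun k _ => ?_
    rw [hrec, map_sub]
  rw [IH, map_sum, ← Finset.sum_sub_distrib] at hkey
  -- rewrite each summand of the RHS of hkey
  have hterm : ∀ j ∈ Finset.univ.filter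
      (fun j : Fin n => len σ' = len (σ' * simpleT j) + 1),
      (((j : ℕ) + 1 : ℂ)) • S (σ' * simpleT j) -
        rename (Equiv.swap i.castSucc i.succ) ((((j : ℕ) + 1 : ℂ)) • S (σ' * simpleT j))
      = if len σ = len (σ * simpleT j) + 1 then
          (((j : ℕ) + 1 : ℂ)) • ((X i.castSucc - X i.succ) * S (σ * simpleT j)) else 0 := by
    intro j hj
    rw [Finset.mem_filter] at hj
    have hj2 : len σ' = len (σ' * simpleT j) + 1 := hj.2
    have hiσj : simpleT i * (σ' * simpleT j) = σ * simpleT j := by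
      rw [hσ', ← mul_assoc, ← mul_assoc, simpleT_mul_self, one_mul]
    by_cases hcond : len σ = len (σ * simpleT j) + 1
    · rw [if_pos hcond]
      have hdown : len (σ' * simpleT j) = len (simpleT i * (σ' * simpleT j)) + 1 := by
        rw [hiσj]; omega
      have := hS.2 (σ' * simpleT j) i hdown
      rw [hiσj] at this
      rw [map_smul, ← smul_sub, ← this]
    · rw [if_neg hcond]
      have hup : len (simpleT i * (σ' * simpleT j)) = len (σ' * simpleT j) + 1 := by
        rcases len_simple_mul_cases (σ' * simpleT j) i with h | h
        · exact h
        · rw [hiσj] at h; omega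
      rw [map_smul, S_symm hS hup, sub_self]
  rw [Finset.sum_congr rfl hterm] at hkey
  rw [Finset.sum_ite, Finset.sum_const_zero, add_zero, Finset.filter_filter] at hkey
  -- identify the filter set
  have hset : Finset.univ.filter
      (fun j : Fin n => len σ' = len (σ' * simpleT j) + 1 ∧ len σ = len (σ * simpleT j) + 1)
      = Finset.univ.filter (fun j : Fin n => len σ = len (σ * simpleT j) + 1) := by
    apply Finset.filter_congr
    intro j _
    constructor
    · exact fun h => h.2
    · intro h
      refine ⟨?_, h⟩
      have hc1 := len_mul_simple_cases σ' j
      have hc2 : len (σ' * simpleT j) = len (σ * simpleT j) + 1 ∨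
          len (σ * simpleT j) = len (σ' * simpleT j) + 1 := by
        have := len_simple_mul_cases (σ * simpleT j) i
        rw [show simpleT i * (σ * simpleT j) = σ' * simpleT j by rw [hσ', mul_assoc]] at this
        tauto
      omega
  rw [hset] at hkey
  -- pull the factor out and cancel
  have hfinal : (X i.castSucc - X i.succ) * ∑ k : Fin (n+1), pderiv k (S σ)
      = (X i.castSucc - X i.succ) *
        ∑ j ∈ Finset.univ.filter (fun j : Fin n => len σ = len (σ * simpleT j) + 1),
          (((j : ℕ) + 1 : ℂ)) • S (σ * simpleT j) := by
    rw [hkey, Finset.mul_sum]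
    exact Finset.sum_congr rfl fun j _ => (mul_smul_comm _ _ _).symm
  exact mul_left_cancel₀ (X_sub_ne_zero (cs_ne i)) hfinal

lemma rev_mul_simple (i : Fin n) :
    (Fin.revPerm : Equiv.Perm (Fin (n+1))) * simpleT i = simpleT i.rev * Fin.revPerm := by
  rw [simpleT, Equiv.mul_swap_eq_swap_mul]
  congr 1
  rw [simpleT, Fin.revPerm_apply, Fin.revPerm_apply, Fin.rev_castSucc, Fin.rev_succ,
    Equiv.swap_comm]

lemma S_simple_rev {S : Equiv.Perm (Fin (n+1)) → MvPolynomial (Fin (n+1)) ℂ}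
    (hS : IsSchubertFamily S) (j : Fin n) :
    S (simpleT j * Fin.revPerm) =
      ∏ m, (X m : MvPolynomial (Fin (n+1)) ℂ) ^
        (if m = j.castSucc then n - (m : ℕ) - 1 else n - (m : ℕ)) := by
  have hlen : len (Fin.revPerm : Equiv.Perm (Fin (n+1)))
      = len (simpleT j * (Fin.revPerm : Equiv.Perm (Fin (n+1)))) + 1 := by
    rw [len_simple_mul, rev_inv_eq]
    exact len_rev_mul_simple j
  have h2 := hS.2 Fin.revPerm j hlen
  rw [hS.1, rename_swap_prod] at h2
  set f : Fin (n+1) → ℕ :=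
    fun m => if m = j.castSucc then n - (m : ℕ) - 1 else n - (m : ℕ) with hf
  have hjlt : (j : ℕ) < n := j.isLt
  have hc : ((j.castSucc : Fin (n+1)) : ℕ) = (j : ℕ) := rfl
  have hc' : ((j.succ : Fin (n+1)) : ℕ) = (j : ℕ) + 1 := rfl
  have claim1 : (X j.castSucc : MvPolynomial (Fin (n+1)) ℂ) * ∏ m, X m ^ f m
      = ∏ m, (X m : MvPolynomial (Fin (n+1)) ℂ) ^ (n - (m : ℕ)) := by
    rw [X_mul_prod_pow]
    refine Finset.prod_congr rfl fun m _ => ?_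
    congr 1
    simp only [hf]
    by_cases hm : m = j.castSucc
    · subst hm; rw [if_pos rfl, if_pos rfl, hc]; omega
    · rw [if_neg hm, if_neg hm, add_zero]
  have claim2 : (X j.succ : MvPolynomial (Fin (n+1)) ℂ) * ∏ m, X m ^ f m
      = ∏ m, (X m : MvPolynomial (Fin (n+1)) ℂ) ^
          (n - ((Equiv.swap j.castSucc j.succ m : Fin (n+1)) : ℕ)) := by
    rw [X_mul_prod_pow]
    refine Finset.prod_congr rfl fun m _ => ?_
    congr 1
    simp only [hf]
    by_cases hm : m = j.castSucc
    · subst hm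
      rw [if_pos rfl, Equiv.swap_apply_left, if_neg (cs_ne j), hc, hc']
      omega
    · by_cases hm' : m = j.succ
      · subst hm'
        rw [if_neg hm, Equiv.swap_apply_right, if_pos rfl, hc, hc']
        omega
      · rw [if_neg hm, if_neg hm', Equiv.swap_apply_of_ne_of_ne hm hm', add_zero]
  have h3 : (X j.castSucc - X j.succ : MvPolynomial (Fin (n+1)) ℂ) * ∏ m, X m ^ f m
      = (X j.castSucc - X j.succ) * S (simpleT j * Fin.revPerm) := by
    rw [sub_mul, claim1, claim2, h2]
  exact (mul_left_cancel₀ (X_sub_ne_zero (cs_ne j)) h3).symm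

lemma base {S : Equiv.Perm (Fin (n+1)) → MvPolynomial (Fin (n+1)) ℂ}
    (hS : IsSchubertFamily S) :
    ∑ k : Fin (n+1), pderiv k (S (Fin.revPerm : Equiv.Perm (Fin (n+1)))) =
      ∑ j ∈ Finset.univ.filter
          (fun j : Fin n => len (Fin.revPerm : Equiv.Perm (Fin (n+1)))
            = len ((Fin.revPerm : Equiv.Perm (Fin (n+1))) * simpleT j) + 1),
        (((j : ℕ) + 1 : ℂ)) • S ((Fin.revPerm : Equiv.Perm (Fin (n+1))) * simpleT j) := by
  classical
  have hfilter : Finset.univ.filter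
      (fun j : Fin n => len (Fin.revPerm : Equiv.Perm (Fin (n+1)))
        = len ((Fin.revPerm : Equiv.Perm (Fin (n+1))) * simpleT j) + 1) = Finset.univ :=
    Finset.filter_true_of_mem fun j _ => len_rev_mul_simple j
  rw [hfilter, hS.1]
  -- LHS: sum of partial derivatives of the staircase monomial
  have hL : ∀ k : Fin (n+1),
      pderiv k (∏ m, (X m : MvPolynomial (Fin (n+1)) ℂ) ^ (n - (m : ℕ)))
      = ((n - (k : ℕ) : ℕ) : ℂ) •
          ∏ m, (X m : MvPolynomial (Fin (n+1)) ℂ) ^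
            (if m = k then n - (m : ℕ) - 1 else n - (m : ℕ)) :=
    fun k => pderiv_prod_pow k (fun m => n - (m : ℕ))
  rw [Finset.sum_congr rfl fun k _ => hL k]
  -- RHS: reindex by `Fin.rev`
  have hR : ∀ j : Fin n, (((j : ℕ) + 1 : ℂ)) •
      S ((Fin.revPerm : Equiv.Perm (Fin (n+1))) * simpleT j)
      = (((j : ℕ) + 1 : ℂ)) • S (simpleT j.rev * Fin.revPerm) := by
    intro j; rw [rev_mul_simple]
  rw [Finset.sum_congr rfl fun j _ => hR j]
  rw [Fin.sum_univ_castSucc]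
  have hlast : ((n - ((Fin.last n : Fin (n+1)) : ℕ) : ℕ) : ℂ) = 0 := by
    simp
  rw [hlast, zero_smul, add_zero]
  refine (Fintype.sum_equiv (Fin.revPerm : Equiv.Perm (Fin n))
    (fun j : Fin n => (((j : ℕ) + 1 : ℂ)) • S (simpleT j.rev * Fin.revPerm))
    (fun j : Fin n => ((n - ((j.castSucc : Fin (n+1)) : ℕ) : ℕ) : ℂ) •
      ∏ m, (X m : MvPolynomial (Fin (n+1)) ℂ) ^
        (if m = j.castSucc then n - (m : ℕ) - 1 else n - (m : ℕ))) ?_).symm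
  intro j
  simp only [Fin.revPerm_apply]
  rw [S_simple_rev hS j.rev]
  congr 1
  have h2 : ((j.rev.castSucc : Fin (n+1)) : ℕ) = ((j.rev : Fin n) : ℕ) := rfl
  have h1 : ((j.rev : Fin n) : ℕ) = n - 1 - (j : ℕ) := by
    rw [Fin.val_rev]; omega
  rw [h2, h1]
  have h3 : n - (n - 1 - (j : ℕ)) = (j : ℕ) + 1 := by have := j.isLt; omega
  rw [h3]
  push_cast
  ring

end SchubAux

open SchubAux

/-- `∇ 𝔖_σ = Σ i ⬝ 𝔖_{σ sᵢ}`, summed over weak order covers `σ sᵢ ⋖ σ`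
(indices `1`-based, so the coefficient of `simpleT i` is `i + 1`). -/
theorem nabla_schubert {n : ℕ} (S : Equiv.Perm (Fin (n+1)) → MvPolynomial (Fin (n+1)) ℂ)
    (hS : IsSchubertFamily S) (σ : Equiv.Perm (Fin (n+1))) :
    ∑ i : Fin (n+1), pderiv i (S σ) =
      ∑ i ∈ Finset.univ.filter (fun i : Fin n => len σ = len (σ * simpleT i) + 1),
        (((i : ℕ) + 1 : ℂ)) • S (σ * simpleT i) := by
  suffices H : ∀ (k : ℕ) (σ : Equiv.Perm (Fin (n+1))),
      len (Fin.revPerm : Equiv.Perm (Fin (n+1))) - len σ ≤ k →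
      ∑ i : Fin (n+1), pderiv i (S σ) =
        ∑ i ∈ Finset.univ.filter (fun i : Fin n => len σ = len (σ * simpleT i) + 1),
          (((i : ℕ) + 1 : ℂ)) • S (σ * simpleT i) by
    exact H _ σ le_rfl
  intro k
  induction k with
  | zero =>
      intro σ hk
      have h1 : len σ = len (Fin.revPerm : Equiv.Perm (Fin (n+1))) :=
        le_antisymm (len_le_len_rev σ) (by omega)
      rw [eq_rev_of_len_eq h1]
      exact base hS
  | succ k ih =>
      intro σ hk
      by_cases hrev : σ = Fin.revPerm
      · subst hrev; exact base hS
      · obtain ⟨i, hi⟩ := exists_left_ascent hrev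
        have h2 : len (Fin.revPerm : Equiv.Perm (Fin (n+1))) - len (simpleT i * σ) ≤ k := by
          have ha := len_le_len_rev (simpleT i * σ)
          have hb := len_le_len_rev σ
          have hc : len σ ≠ len (Fin.revPerm : Equiv.Perm (Fin (n+1))) :=
            fun h => hrev (eq_rev_of_len_eq h)
          omega
        exact step hS hi (ih _ h2)
end
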